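/- arXiv:math/0610823 — 3 statements merged into one kernel-verified Lean document; each statement's English description precedes it below -/
import Mathlib

section
/- Let a ∈ A and suppose d := |R⁺_a| is finite. Then the alternating word of length d in the letters i, j whose rightmost letter is i (i.e. (…, j, i, j, i) read left to right, ending with i), taken at a, has the same target and the same σ-composite as the alternating word of length d in i, j whose rightmost letter is j, taken at a. -/
open Pointwise

variable {N : Type*} {A : Type*}

/-- The element `(i j)^m ▷ a` for the action of `F₂(N)` on `A`. -/
def altIter (act : N → A → A) (i j : N) (a : A) : ℕ → A
  | 0 => a
  | m + 1 => act i (act j (altIter act i j a m))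

/-- The set `Θ(i,j;a)`. -/
def ThetaSet (act : N → A → A) (i j : N) (a : A) : Set A :=
  {x | ∃ m : ℕ, x = altIter act i j a m ∨ x = altIter act j i a m}

/-- The set of `ℕ₀`-linear combinations of elements of `s`. -/
def NSpan (s : Set (N →₀ ℝ)) : Set (N →₀ ℝ) :=
  (AddSubmonoid.closure s : Set (N →₀ ℝ))

/-- A generalized root system: a transitive action of `F₂(N)` on `A` (axiom (1)),
roots `root a ⊆ ℝ^{(N)}` with simple roots `α n a` forming a basis (axiom (2)),
and maps `σ i a ∈ GL(ℝ^{(N)})`, satisfying axioms (3)-(7). -/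
structure GRS (N : Type*) (A : Type*) where
  act : N → A → A
  act_invol : ∀ n a, act n (act n a) = a
  act_trans : ∀ a b : A, ∃ l : List N, l.foldr act a = b
  root : A → Set (N →₀ ℝ)
  α : N → A → N →₀ ℝ
  α_mem : ∀ n a, α n a ∈ root a
  α_indep : ∀ a, LinearIndependent ℝ fun n => α n a
  α_span : ∀ a, Submodule.span ℝ (Set.range fun n => α n a) = ⊤
  σ : N → A → (N →₀ ℝ) ≃ₗ[ℝ] (N →₀ ℝ)
  ax3 : ∀ a, root a =
    root a ∩ NSpan (Set.range fun n => α n a) ∪ -(root a ∩ NSpan (Set.range fun n => α n a))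
  ax4 : ∀ i a, (Set.range fun r : ℝ => r • α i a) ∩ root a = {α i a, -α i a}
  ax5_root : ∀ i a, ⇑(σ i a) '' root a = root (act i a)
  ax5_diag : ∀ i a, σ i a (α i a) = -α i (act i a)
  ax5_off : ∀ i a j, j ≠ i →
    ∃ m : ℕ, σ i a (α j a) = α j (act i a) + (m : ℝ) • α i (act i a)
  ax6 : ∀ i a v, σ i (act i a) (σ i a v) = v
  ax7 : ∀ a (i j : N), i ≠ j →
    (root a ∩ {β | ∃ p q : ℕ, β = (p : ℝ) • α i a + (q : ℝ) • α j a}).Finite →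
    (ThetaSet act i j a).Finite ∧
      (ThetaSet act i j a).ncard ∣
        (root a ∩ {β | ∃ p q : ℕ, β = (p : ℝ) • α i a + (q : ℝ) • α j a}).ncard

/-- The positive roots `R⁺_a`. -/
def GRS.pos (G : GRS N A) (a : A) : Set (N →₀ ℝ) :=
  G.root a ∩ NSpan (Set.range fun n => G.α n a)

/-- The target `i₁ ⋯ i_m ▷ a` of the word `(i₁, …, i_m)` at `a`. -/
def GRS.target (G : GRS N A) (l : List N) (a : A) : A :=
  l.foldr G.act a

/-- The σ-composite `σ_{i₁,b₁} ∘ ⋯ ∘ σ_{i_m,b_m}` of the word `(i₁, …, i_m)` at `a`. -/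
noncomputable def GRS.wmap (G : GRS N A) : List N → A → (N →₀ ℝ) ≃ₗ[ℝ] (N →₀ ℝ)
  | [], _ => LinearEquiv.refl ℝ _
  | i :: l, a => (G.wmap l a).trans (G.σ i (G.target l a))

/-- The length `ℓ` of a word at `a`: the minimal length of a word at `a`
with the same target and the same σ-composite. -/
noncomputable def GRS.len (G : GRS N A) (l : List N) (a : A) : ℕ :=
  sInf {m | ∃ l' : List N, l'.length = m ∧
    G.target l' a = G.target l a ∧ G.wmap l' a = G.wmap l a}

/-- A word of length `m` at `a` is reduced if `ℓ = m`. -/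
def GRS.Reduced (G : GRS N A) (l : List N) (a : A) : Prop :=
  G.len l a = l.length

/-- `m_{i,j;a} = |R_a ∩ (ℕ₀ α_{i,a} + ℕ₀ α_{j,a})|`. -/
noncomputable def GRS.mij (G : GRS N A) (i j : N) (a : A) : ℕ :=
  (G.root a ∩ {β | ∃ p q : ℕ, β = (p : ℝ) • G.α i a + (q : ℝ) • G.α j a}).ncard

/-- The alternating word `(i₁, …, i_m)` with `i_k = i` for `k` odd (leftmost letter `i`). -/
def altList (i j : N) : ℕ → List N
  | 0 => []
  | m + 1 => i :: altList j i m

/-- The alternating word of length `m` in the letters `i,j` whose rightmost letter is `i`. -/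
def altR (i j : N) : ℕ → List N
  | 0 => []
  | m + 1 => altR j i m ++ [i]

/-- `a_m = i_m ⋯ i_1 ▷ a` for the alternating sequence with `i_k = i` for odd `k`. -/
def aIter (act : N → A → A) (i j : N) (a : A) : ℕ → A
  | 0 => a
  | m + 1 => act (if m % 2 = 0 then i else j) (aIter act i j a m)

/-- The set of real roots `R^{re}_a`. -/
def GRS.reroot (G : GRS N A) (a : A) : Set (N →₀ ℝ) :=
  {β | ∃ (b : A) (l : List N) (n : N), G.target l b = a ∧ β = G.wmap l b (G.α n b)}

/-- The word `C(i,j;a)`: alternating of length `m_{i,j;a} - 1` with leftmost letter `i`. -/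
noncomputable def GRS.Cword (G : GRS N A) (i j : N) (a : A) : List N :=
  altList i j (G.mij i j a - 1)

namespace Stmt7Aux
open scoped Classical

variable {N : Type*} {A : Type*}

/-- The basis of simple roots at `a`. -/
noncomputable def bas (G : GRS N A) (a : A) : Module.Basis N ℝ (N →₀ ℝ) :=
  Module.Basis.mk (G.α_indep a) (G.α_span a).ge

lemma bas_apply (G : GRS N A) (a : A) (n : N) : bas G a n = G.α n a := Module.Basis.mk_apply _ _ _

lemma repr_α (G : GRS N A) (a : A) (n m : N) :
    (bas G a).repr (G.α n a) m = if n = m then 1 else 0 := by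
  rw [← bas_apply, (bas G a).repr_self, Finsupp.single_apply]

lemma repr_comb (G : GRS N A) (a : A) {k l : N} (hkl : k ≠ l) (p q : ℝ) :
    (bas G a).repr (p • G.α k a + q • G.α l a) k = p ∧
    (bas G a).repr (p • G.α k a + q • G.α l a) l = q := by
  constructor <;>
  · rw [map_add, map_smul, map_smul, Finsupp.add_apply, Finsupp.smul_apply, Finsupp.smul_apply,
      repr_α, repr_α]
    simp [hkl, hkl.symm]

lemma mem_NSpan (G : GRS N A) (a : A) {i j : N} (hN : ∀ n : N, n = i ∨ n = j)
    (v : N →₀ ℝ) :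
    v ∈ NSpan (Set.range fun n => G.α n a) ↔
      ∃ p q : ℕ, v = (p : ℝ) • G.α i a + (q : ℝ) • G.α j a := by
  constructor
  · intro hv
    induction hv using AddSubmonoid.closure_induction with
    | mem x hx =>
      obtain ⟨n, rfl⟩ := hx
      rcases hN n with rfl | rfl
      · exact ⟨1, 0, by simp⟩
      · exact ⟨0, 1, by simp⟩
    | zero => exact ⟨0, 0, by simp⟩
    | add x y _ _ hx hy =>
      obtain ⟨p, q, rfl⟩ := hx
      obtain ⟨p', q', rfl⟩ := hy
      exact ⟨p + p', q + q', by push_cast; module⟩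
  · rintro ⟨p, q, rfl⟩
    have h1 : G.α i a ∈ NSpan (Set.range fun n => G.α n a) :=
      AddSubmonoid.subset_closure ⟨i, rfl⟩
    have h2 : G.α j a ∈ NSpan (Set.range fun n => G.α n a) :=
      AddSubmonoid.subset_closure ⟨j, rfl⟩
    have e1 : (p : ℝ) • G.α i a = p • G.α i a := (Nat.cast_smul_eq_nsmul ℝ p _)
    have e2 : (q : ℝ) • G.α j a = q • G.α j a := (Nat.cast_smul_eq_nsmul ℝ q _)
    rw [e1, e2]
    exact AddSubmonoid.add_mem _ (AddSubmonoid.nsmul_mem _ h1 p) (AddSubmonoid.nsmul_mem _ h2 q)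

lemma mem_pos (G : GRS N A) (a : A) {i j : N} (hN : ∀ n : N, n = i ∨ n = j) (v : N →₀ ℝ) :
    v ∈ G.pos a ↔ v ∈ G.root a ∧
      ∃ p q : ℕ, v = (p : ℝ) • G.α i a + (q : ℝ) • G.α j a := by
  unfold GRS.pos
  rw [Set.mem_inter_iff, mem_NSpan G a hN]

lemma zero_not_root (G : GRS N A) (a : A) (i : N) : (0 : N →₀ ℝ) ∉ G.root a := by
  intro h0
  have : (0 : N →₀ ℝ) ∈ (Set.range fun r : ℝ => r • G.α i a) ∩ G.root a :=
    ⟨⟨0, by simp⟩, h0⟩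
  rw [G.ax4 i a] at this
  have hne : G.α i a ≠ 0 := (G.α_indep a).ne_zero i
  rcases this with h | h
  · exact hne h.symm
  · exact hne (by simpa using congrArg Neg.neg h.symm)

lemma α_mem_pos (G : GRS N A) (a : A) (n : N) : G.α n a ∈ G.pos a :=
  ⟨G.α_mem n a, AddSubmonoid.subset_closure ⟨n, rfl⟩⟩

lemma pos_neg_disjoint (G : GRS N A) (a : A) {i j : N} (hij : i ≠ j)
    (hN : ∀ n : N, n = i ∨ n = j) (v : N →₀ ℝ) (hv : v ∈ G.pos a) (hv' : -v ∈ G.pos a) :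
    False := by
  obtain ⟨hr, p, q, he⟩ := (mem_pos G a hN v).1 hv
  obtain ⟨hr', p', q', he'⟩ := (mem_pos G a hN (-v)).1 hv'
  have hsum : ((p : ℝ) + p') • G.α i a + ((q : ℝ) + q') • G.α j a = 0 := by
    have hz : ((p:ℝ) • G.α i a + (q:ℝ) • G.α j a) + ((p':ℝ) • G.α i a + (q':ℝ) • G.α j a) = 0 := by
      rw [← he, ← he']; simp
    rw [← hz]; module
  have hp := (repr_comb G a hij ((p : ℝ) + p') ((q : ℝ) + q')).1
  have hq := (repr_comb G a hij ((p : ℝ) + p') ((q : ℝ) + q')).2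
  rw [hsum, map_zero] at hp hq
  simp only [Finsupp.zero_apply] at hp hq
  have hp0 : (p : ℝ) = 0 := by
    have h1 : (0:ℝ) ≤ (p:ℝ) := Nat.cast_nonneg p
    have h2 : (0:ℝ) ≤ (p':ℝ) := Nat.cast_nonneg p'
    linarith
  have hq0 : (q : ℝ) = 0 := by
    have h1 : (0:ℝ) ≤ (q:ℝ) := Nat.cast_nonneg q
    have h2 : (0:ℝ) ≤ (q':ℝ) := Nat.cast_nonneg q'
    linarith
  have hv0 : v = 0 := by rw [he, hp0, hq0]; simp
  rw [hv0] at hr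
  exact zero_not_root G a i hr

lemma root_cases (G : GRS N A) (a : A) (v : N →₀ ℝ) (hv : v ∈ G.root a) :
    v ∈ G.pos a ∨ -v ∈ G.pos a := by
  have h := G.ax3 a
  rw [h] at hv
  rcases hv with h' | h'
  · exact Or.inl h'
  · exact Or.inr (by rwa [Set.mem_neg] at h')

lemma repr_expand (G : GRS N A) (a : A) {i j : N} (hij : i ≠ j)
    (hN : ∀ n : N, n = i ∨ n = j) (x : N →₀ ℝ) :
    x = (bas G a).repr x i • G.α i a + (bas G a).repr x j • G.α j a := by
  have hx : x ∈ Submodule.span ℝ (Set.range fun n => G.α n a) := by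
    rw [G.α_span]; trivial
  induction hx using Submodule.span_induction with
  | mem y hy =>
    obtain ⟨n, rfl⟩ := hy
    rcases hN n with rfl | rfl
    · simp [repr_α, hij]
    · simp [repr_α, hij.symm]
  | zero => simp
  | add y z _ _ hy hz =>
    rw [map_add, Finsupp.add_apply, Finsupp.add_apply]
    conv_lhs => rw [hy, hz]
    module
  | smul r y _ hy =>
    rw [map_smul, Finsupp.smul_apply, Finsupp.smul_apply, smul_eq_mul, smul_eq_mul]
    conv_lhs => rw [hy]
    rw [smul_add, smul_smul, smul_smul]

lemma sigma_symm_apply (G : GRS N A) (c : N) (a : A) (x : N →₀ ℝ) :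
    (G.σ c a).symm x = G.σ c (G.act c a) x := by
  have h := G.ax6 c a ((G.σ c a).symm x)
  rw [LinearEquiv.apply_symm_apply] at h
  exact h.symm

lemma sigma_root (G : GRS N A) (c : N) (a : A) (x : N →₀ ℝ) (hx : x ∈ G.root a) :
    G.σ c a x ∈ G.root (G.act c a) := by
  rw [← G.ax5_root]; exact Set.mem_image_of_mem _ hx

lemma sigma_symm_root (G : GRS N A) (c : N) (a : A) (x : N →₀ ℝ)
    (hx : x ∈ G.root (G.act c a)) : (G.σ c a).symm x ∈ G.root a := by
  rw [sigma_symm_apply]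
  have := sigma_root G c (G.act c a) x hx
  rwa [G.act_invol] at this

lemma sigma_pos (G : GRS N A) {k l : N} (hkl : k ≠ l) (hN : ∀ n : N, n = k ∨ n = l)
    (a : A) (x : N →₀ ℝ) (hx : x ∈ G.pos a) (hxk : x ≠ G.α k a) :
    G.σ k a x ∈ G.pos (G.act k a) ∧ G.σ k a x ≠ G.α k (G.act k a) := by
  obtain ⟨hr, p, q, he⟩ := (mem_pos G a hN x).1 hx
  have hq0 : q ≠ 0 := by
    rintro rfl
    have hline : x ∈ (Set.range fun r : ℝ => r • G.α k a) ∩ G.root a :=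
      ⟨⟨(p : ℝ), by rw [he]; simp⟩, hr⟩
    rw [G.ax4 k a] at hline
    rcases hline with h | h
    · exact hxk h
    · refine pos_neg_disjoint G a hkl hN x hx ?_
      rw [h, neg_neg]
      exact α_mem_pos G a k
  obtain ⟨m, hm⟩ := G.ax5_off k a l hkl.symm
  have him : G.σ k a x =
      ((q : ℝ) * m - p) • G.α k (G.act k a) + (q : ℝ) • G.α l (G.act k a) := by
    rw [he, map_add, map_smul, map_smul, G.ax5_diag, hm]
    have : (m : ℝ) • G.α k (G.act k a) = ((m:ℕ) : ℝ) • G.α k (G.act k a) := rfl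
    module
  have hroot := sigma_root G k a x hr
  have hreprl : (bas G (G.act k a)).repr (G.σ k a x) l = q := by
    rw [him]; exact (repr_comb G (G.act k a) hkl _ _).2
  constructor
  · rcases root_cases G _ _ hroot with h | h
    · exact h
    · exfalso
      obtain ⟨_, p', q', he'⟩ := (mem_pos G (G.act k a) hN (-(G.σ k a x))).1 h
      have h2 : (bas G (G.act k a)).repr (-(G.σ k a x)) l = q' := by
        rw [he']; exact (repr_comb G (G.act k a) hkl _ _).2
      rw [map_neg, Finsupp.neg_apply, hreprl] at h2
      have : (q : ℝ) = 0 := by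
        have h1 : (0:ℝ) ≤ (q:ℝ) := Nat.cast_nonneg q
        have h3 : (0:ℝ) ≤ (q':ℝ) := Nat.cast_nonneg q'
        linarith
      exact hq0 (by exact_mod_cast this)
  · intro hEq
    rw [hEq, repr_α] at hreprl
    simp [hkl] at hreprl
    exact hq0 (by exact_mod_cast hreprl.symm)

lemma altR_cons (m : ℕ) : ∀ i j : N, altR i j (m+1) = (if m % 2 = 0 then i else j) :: altR i j m := by
  induction m with
  | zero => intro i j; simp [altR]
  | succ m ih =>
    intro i j
    have h1 : altR i j (m+2) = altR j i (m+1) ++ [i] := rfl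
    rw [h1, ih j i]
    have h2 : altR i j (m+1) = altR j i m ++ [i] := rfl
    rcases Nat.mod_two_eq_zero_or_one m with h | h
    · have h3 : (m+1) % 2 = 1 := by omega
      simp [h, h3, h2]
    · have h3 : (m+1) % 2 = 0 := by omega
      simp [h, h3, h2]

lemma target_cons (G : GRS N A) (c : N) (w : List N) (a : A) :
    G.target (c :: w) a = G.act c (G.target w a) := rfl

lemma wmap_cons (G : GRS N A) (c : N) (w : List N) (a : A) :
    G.wmap (c :: w) a = (G.wmap w a).trans (G.σ c (G.target w a)) := rfl

lemma target_altR (G : GRS N A) (i j : N) (a : A) (m : ℕ) :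
    G.target (altR i j m) a = aIter G.act i j a m := by
  induction m with
  | zero => rfl
  | succ m ih =>
    rw [altR_cons, target_cons, ih]
    rfl

lemma wmap_altR_succ (G : GRS N A) (i j : N) (a : A) (m : ℕ) :
    G.wmap (altR i j (m+1)) a =
      (G.wmap (altR i j m) a).trans
        (G.σ (if m % 2 = 0 then i else j) (aIter G.act i j a m)) := by
  rw [altR_cons, wmap_cons, target_altR]

lemma wmap_root_image (G : GRS N A) (w : List N) (a : A) :
    ⇑(G.wmap w a) '' G.root a = G.root (G.target w a) := by
  induction w with
  | nil => ext y; simp [GRS.wmap, GRS.target, LinearEquiv.refl_apply]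
  | cons c w ih =>
    rw [wmap_cons, target_cons, ← G.ax5_root, ← ih]
    ext y
    simp [Set.mem_image, LinearEquiv.trans_apply]

lemma wmap_root (G : GRS N A) (w : List N) (a : A) (x : N →₀ ℝ) (hx : x ∈ G.root a) :
    G.wmap w a x ∈ G.root (G.target w a) := by
  rw [← wmap_root_image]; exact Set.mem_image_of_mem _ hx

lemma wmap_symm_root (G : GRS N A) (w : List N) (a : A) (y : N →₀ ℝ)
    (hy : y ∈ G.root (G.target w a)) : (G.wmap w a).symm y ∈ G.root a := by
  rw [← wmap_root_image] at hy
  obtain ⟨x, hx, hxy⟩ := hy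
  rwa [← hxy, LinearEquiv.symm_apply_apply]

lemma pos_repr_nonneg (G : GRS N A) {k l : N} (hkl : k ≠ l) (hN : ∀ n : N, n = k ∨ n = l)
    (t : A) (x : N →₀ ℝ) (hx : x ∈ G.pos t) (n : N) : 0 ≤ (bas G t).repr x n := by
  obtain ⟨_, p, q, he⟩ := (mem_pos G t hN x).1 hx
  rcases hN n with rfl | rfl
  · rw [he, (repr_comb G t hkl _ _).1]; exact Nat.cast_nonneg p
  · rw [he, (repr_comb G t hkl _ _).2]; exact Nat.cast_nonneg q

lemma main_induction (G : GRS N A) {k l : N} (hkl : k ≠ l) (hN : ∀ n : N, n = k ∨ n = l)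
    (a : A) (hfin : (G.pos a).Finite) :
    ∀ m, m ≤ (G.pos a).ncard →
      {x ∈ G.pos a | G.wmap (altR k l m) a x ∈ -G.pos (aIter G.act k l a m)}.ncard = m ∧
      ∀ m', m' + 1 = m →
        (G.wmap (altR k l m') a).symm
          (G.α (if m' % 2 = 0 then k else l) (aIter G.act k l a m')) ∈ G.pos a := by
  -- abbreviations
  set d := (G.pos a).ncard with hd
  have hN' : ∀ n : N, n = l ∨ n = k := fun n => (hN n).symm
  have hsig : ∀ (c : N) (t : A) (y : N →₀ ℝ), y ∈ G.pos t → y ≠ G.α c t →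
      G.σ c t y ∈ G.pos (G.act c t) ∧ G.σ c t y ≠ G.α c (G.act c t) := by
    intro c
    rcases hN c with rfl | rfl
    · exact fun t y hy hy' => sigma_pos G hkl hN t y hy hy'
    · exact fun t y hy hy' => sigma_pos G hkl.symm hN' t y hy hy'
  have hdisj : ∀ (t : A) (y : N →₀ ℝ), y ∈ G.pos t → -y ∈ G.pos t → False :=
    fun t y => pos_neg_disjoint G t hkl hN y
  set c : ℕ → N := fun m => if m % 2 = 0 then k else l with hc
  set b : ℕ → A := fun m => aIter G.act k l a m with hb
  set w : ℕ → ((N →₀ ℝ) ≃ₗ[ℝ] (N →₀ ℝ)) := fun m => G.wmap (altR k l m) a with hw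
  have hbsucc : ∀ m, b (m+1) = G.act (c m) (b m) := fun m => rfl
  have hwsucc : ∀ m (x : N →₀ ℝ), w (m+1) x = G.σ (c m) (b m) (w m x) := by
    intro m x
    simp only [hw]
    rw [wmap_altR_succ]
    rfl
  have hwroot : ∀ m (x : N →₀ ℝ), x ∈ G.root a → w m x ∈ G.root (b m) := by
    intro m x hx
    have := wmap_root G (altR k l m) a x hx
    rwa [target_altR] at this
  have hwsymmroot : ∀ m (y : N →₀ ℝ), y ∈ G.root (b m) → (w m).symm y ∈ G.root a := by
    intro m y hy
    exact wmap_symm_root G (altR k l m) a y (by rwa [target_altR])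
  have hcalt : ∀ m, c (m+1) ≠ c m ∧ (∀ n : N, n = c (m+1) ∨ n = c m) := by
    intro m
    rcases Nat.mod_two_eq_zero_or_one m with h | h
    · have h2 : (m+1) % 2 = 1 := by omega
      simp only [hc, h, h2]
      exact ⟨by simpa using hkl.symm, fun n => by simpa using (hN n).symm⟩
    · have h2 : (m+1) % 2 = 0 := by omega
      simp only [hc, h, h2]
      exact ⟨by simpa using hkl, fun n => by simpa using hN n⟩
  intro m
  induction m with
  | zero =>
    intro _
    constructor
    · have hT0 : {x ∈ G.pos a | w 0 x ∈ -G.pos (b 0)} = ∅ := by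
        ext x
        simp only [Set.mem_setOf_eq, Set.mem_empty_iff_false, iff_false, not_and]
        intro hx hx'
        have hb0 : b 0 = a := rfl
        have hw0 : w 0 x = x := rfl
        rw [hw0, hb0] at hx'
        exact hdisj a x hx (Set.mem_neg.1 hx')
      rw [hT0]
      simp
    · intro m' hm'; omega
  | succ m ih =>
    intro hm1
    obtain ⟨hT, hβprev⟩ := ih (by omega)
    -- Step A : β ∈ pos a
    have hβ : (w m).symm (G.α (c m) (b m)) ∈ G.pos a := by
      rcases Nat.eq_zero_or_eq_succ_pred m with h0 | hsuc
      · subst h0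
        have : (w 0).symm (G.α (c 0) (b 0)) = G.α k a := by
          have hc0 : c 0 = k := by simp [hc]
          have hb0 : b 0 = a := rfl
          rw [hc0, hb0]; rfl
        rw [this]; exact α_mem_pos G a k
      · set m' := m - 1 with hm'
        have hmeq : m = m' + 1 := hsuc
        by_contra hcon
        have hβroot : (w m).symm (G.α (c m) (b m)) ∈ G.root a :=
          hwsymmroot m _ (G.α_mem _ _)
        have hβneg : -((w m).symm (G.α (c m) (b m))) ∈ G.pos a := by
          rcases root_cases G a _ hβroot with h | h
          · exact absurd h hcon
          · exact h
        have hprev : (w m').symm (G.α (c m') (b m')) ∈ G.pos a := by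
          have := hβprev m' hmeq.symm
          exact this
        -- (w m).symm (α (c m') (b m)) = - (w m').symm (α (c m') (b m'))
        have hy : (w m).symm (G.α (c m') (b m)) =
            -((w m').symm (G.α (c m') (b m'))) := by
          have hwm : ∀ x, (w m).symm x = (w m').symm ((G.σ (c m') (b m')).symm x) := by
            intro x
            simp only [hmeq, hw]
            rw [wmap_altR_succ]
            rfl
          rw [hwm]
          have hσ : (G.σ (c m') (b m')).symm (G.α (c m') (b m)) =
              -(G.α (c m') (b m')) := by
            rw [sigma_symm_apply]
            have hbm : b m = G.act (c m') (b m') := by rw [hmeq]; exact hbsucc m'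
            rw [← hbm]
            have := G.ax5_diag (c m') (b m)
            rw [this]
            have : G.act (c m') (b m) = b m' := by
              rw [hbm, G.act_invol]
            rw [this]
          rw [hσ, map_neg]
        -- every simple root at b m pulls back to a negative root
        have hneg : ∀ n : N, -((w m).symm (G.α n (b m))) ∈ G.pos a := by
          intro n
          have hmm : c m = c (m' + 1) := by rw [← hmeq]
          rcases (hcalt m').2 n with h | h
          · rw [h, ← hmm]; exact hβneg
          · rw [h, hy, neg_neg]; exact hprev
        -- then every positive root is in T m
        have hsub : G.pos a ⊆ {x ∈ G.pos a | w m x ∈ -G.pos (b m)} := by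
          intro x hx
          refine ⟨hx, ?_⟩
          rcases root_cases G (b m) (w m x) (hwroot m x hx.1) with h | h
          · exfalso
            obtain ⟨_, p, q, he⟩ := (mem_pos G (b m) hN (w m x)).1 h
            have hxe : x = (p:ℝ) • ((w m).symm (G.α k (b m))) +
                (q:ℝ) • ((w m).symm (G.α l (b m))) := by
              have : x = (w m).symm (w m x) := (LinearEquiv.symm_apply_apply _ _).symm
              rw [this, he, map_add, map_smul, map_smul]
            have hru : ∀ n : N, (bas G a).repr x n ≤ 0 := by
              intro n
              have h1 := pos_repr_nonneg G hkl hN a _ (hneg k) n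
              have h2 := pos_repr_nonneg G hkl hN a _ (hneg l) n
              rw [map_neg, Finsupp.neg_apply] at h1 h2
              have : (bas G a).repr x n =
                  (p:ℝ) * (bas G a).repr ((w m).symm (G.α k (b m))) n +
                  (q:ℝ) * (bas G a).repr ((w m).symm (G.α l (b m))) n := by
                rw [hxe]; simp [Finsupp.add_apply, Finsupp.smul_apply]
              rw [this]
              have hp : (0:ℝ) ≤ p := Nat.cast_nonneg p
              have hq : (0:ℝ) ≤ q := Nat.cast_nonneg q
              nlinarith
            have hx0 : x = 0 := by
              have hek := le_antisymm (hru k) (pos_repr_nonneg G hkl hN a x hx k)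
              have hel := le_antisymm (hru l) (pos_repr_nonneg G hkl hN a x hx l)
              have := repr_expand G a hkl hN x
              rw [hek, hel] at this
              simpa using this
            rw [hx0] at hx
            exact zero_not_root G a k hx.1
          · exact Set.mem_neg.2 h
        have hTeq : {x ∈ G.pos a | w m x ∈ -G.pos (b m)} = G.pos a :=
          Set.Subset.antisymm (fun x hx => hx.1) hsub
        rw [hTeq] at hT
        omega
    -- Step B : T (m+1) = insert β (T m)
    have hβnotin : (w m).symm (G.α (c m) (b m)) ∉
        {x ∈ G.pos a | w m x ∈ -G.pos (b m)} := by
      rintro ⟨-, hmem⟩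
      rw [LinearEquiv.apply_symm_apply] at hmem
      exact hdisj (b m) _ (α_mem_pos G (b m) (c m)) (Set.mem_neg.1 hmem)
    have hTsucc : {x ∈ G.pos a | w (m+1) x ∈ -G.pos (b (m+1))} =
        insert ((w m).symm (G.α (c m) (b m))) {x ∈ G.pos a | w m x ∈ -G.pos (b m)} := by
      ext x
      simp only [Set.mem_setOf_eq, Set.mem_insert_iff]
      constructor
      · rintro ⟨hxpos, hxw⟩
        rw [hwsucc] at hxw
        rcases root_cases G (b m) (w m x) (hwroot m x hxpos.1) with h | h
        · by_cases hxeq : w m x = G.α (c m) (b m)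
          · left
            rw [← hxeq, LinearEquiv.symm_apply_apply]
          · exfalso
            have := (hsig (c m) (b m) (w m x) h hxeq).1
            rw [← hbsucc] at this
            exact hdisj (b (m+1)) _ this (Set.mem_neg.1 hxw)
        · right
          exact ⟨hxpos, Set.mem_neg.2 h⟩
      · rintro (rfl | ⟨hxpos, hxw⟩)
        · refine ⟨hβ, ?_⟩
          rw [hwsucc, LinearEquiv.apply_symm_apply, G.ax5_diag, ← hbsucc]
          rw [Set.mem_neg, neg_neg]
          exact α_mem_pos G (b (m+1)) (c m)
        · refine ⟨hxpos, ?_⟩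
          rw [hwsucc]
          have hy' : -(w m x) ∈ G.pos (b m) := Set.mem_neg.1 hxw
          have hyne : -(w m x) ≠ G.α (c m) (b m) := by
            intro hEq
            have hxβ : x = -((w m).symm (G.α (c m) (b m))) := by
              rw [← hEq, map_neg, LinearEquiv.symm_apply_apply, neg_neg]
            apply hdisj a ((w m).symm (G.α (c m) (b m))) hβ
            rw [← hxβ]; exact hxpos
          have := (hsig (c m) (b m) _ hy' hyne).1
          rw [← hbsucc] at this
          rw [Set.mem_neg]
          have heq : -(G.σ (c m) (b m) (w m x)) = G.σ (c m) (b m) (-(w m x)) := by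
            rw [map_neg]
          rw [heq]
          exact this
    constructor
    · rw [hTsucc, Set.ncard_insert_of_notMem hβnotin
        (hfin.subset (fun x hx => hx.1)), hT]
    · intro m' hm'
      have : m' = m := by omega
      subst this
      exact hβ

lemma endgame (G : GRS N A) {k l : N} (hkl : k ≠ l) (hN : ∀ n : N, n = k ∨ n = l)
    (a : A) (hfin : (G.pos a).Finite) :
    (∀ x ∈ G.pos a,
        G.wmap (altR k l (G.pos a).ncard) a x ∈ -G.pos (aIter G.act k l a (G.pos a).ncard)) ∧
    (∀ y ∈ G.pos (aIter G.act k l a (G.pos a).ncard),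
        (G.wmap (altR k l (G.pos a).ncard) a).symm y ∈ -G.pos a) := by
  set d := (G.pos a).ncard with hd
  obtain ⟨hT, -⟩ := main_induction G hkl hN a hfin d le_rfl
  have hTeq : {x ∈ G.pos a | G.wmap (altR k l d) a x ∈ -G.pos (aIter G.act k l a d)} =
      G.pos a := by
    refine Set.eq_of_subset_of_ncard_le (fun x hx => hx.1) ?_ hfin
    rw [hT]
  have h1 : ∀ x ∈ G.pos a,
      G.wmap (altR k l d) a x ∈ -G.pos (aIter G.act k l a d) := by
    intro x hx
    have : x ∈ {x ∈ G.pos a | G.wmap (altR k l d) a x ∈ -G.pos (aIter G.act k l a d)} := by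
      rw [hTeq]; exact hx
    exact this.2
  refine ⟨h1, ?_⟩
  intro y hy
  have hyr : y ∈ G.root (aIter G.act k l a d) := hy.1
  have hxr : (G.wmap (altR k l d) a).symm y ∈ G.root a := by
    refine wmap_symm_root G _ a y ?_
    rwa [target_altR]
  rcases root_cases G a _ hxr with h | h
  · exfalso
    have := h1 _ h
    rw [LinearEquiv.apply_symm_apply] at this
    exact pos_neg_disjoint G _ hkl hN y hy (Set.mem_neg.1 this)
  · exact Set.mem_neg.2 h

section Theta

variable (act : N → A → A)

lemma iter_cancel (f g : A → A) (hfg : ∀ x, g (f x) = x) : ∀ n x, g^[n] (f^[n] x) = x := by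
  intro n
  induction n with
  | zero => intro x; rfl
  | succ n ih =>
    intro x
    rw [Function.iterate_succ_apply' f, Function.iterate_succ_apply g, hfg]
    exact ih x

lemma altIter_eq_iter (i j : N) (a : A) (m : ℕ) :
    altIter act i j a m = (fun x => act i (act j x))^[m] a := by
  induction m with
  | zero => rfl
  | succ m ih =>
    show act i (act j (altIter act i j a m)) = _
    rw [ih, Function.iterate_succ_apply']

lemma aIter_two_mul (i j : N) (a : A) (s : ℕ) :
    aIter act i j a (2*s) = (fun x => act j (act i x))^[s] a := by
  induction s with
  | zero => rfl
  | succ s ih =>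
    have h1 : 2*(s+1) = (2*s+1)+1 := by ring
    rw [h1]
    show act (if (2*s+1) % 2 = 0 then i else j)
        (act (if (2*s) % 2 = 0 then i else j) (aIter act i j a (2*s))) = _
    have e1 : (2*s+1) % 2 = 1 := by omega
    have e2 : (2*s) % 2 = 0 := by omega
    rw [e1, e2, ih, Function.iterate_succ_apply']
    simp

lemma aIter_odd (i j : N) (a : A) (s : ℕ) :
    aIter act i j a (2*s+1) = act i (aIter act i j a (2*s)) := by
  show act (if (2*s) % 2 = 0 then i else j) _ = _
  have e2 : (2*s) % 2 = 0 := by omega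
  rw [e2]
  simp

lemma theta_period (i j : N) (a : A)
    (hinv : ∀ n x, act n (act n x) = x)
    (hfin : (ThetaSet act i j a).Finite) :
    ∃ e : ℕ, 0 < e ∧ (fun x => act i (act j x))^[e] a = a ∧ (ThetaSet act i j a).ncard = e := by
  classical
  set f : A → A := fun x => act i (act j x) with hf
  set g : A → A := fun x => act j (act i x) with hg
  have hgf : ∀ x, g (f x) = x := by intro x; simp [hf, hg, hinv]
  have hfg : ∀ x, f (g x) = x := by intro x; simp [hf, hg, hinv]
  have hmem : ∀ m, f^[m] a ∈ ThetaSet act i j a := by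
    intro m
    exact ⟨m, Or.inl (altIter_eq_iter act i j a m).symm⟩
  have hfinty : Finite (ThetaSet act i j a) := hfin.to_subtype
  obtain ⟨n, n', hne, heq⟩ := Finite.exists_ne_map_eq_of_infinite
    (fun m : ℕ => (⟨f^[m] a, hmem m⟩ : ThetaSet act i j a))
  have heq' : f^[n] a = f^[n'] a := congrArg Subtype.val heq
  -- wlog n < n'
  have hper : ∃ e, 0 < e ∧ f^[e] a = a := by
    rcases Nat.lt_or_ge n n' with h | h
    · refine ⟨n' - n, by omega, ?_⟩
      have : f^[n] (f^[n' - n] a) = f^[n] a := by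
        rw [← Function.iterate_add_apply]
        rw [show n + (n' - n) = n' from by omega]
        exact heq'.symm
      have := congrArg g^[n] this
      rwa [iter_cancel f g hgf, iter_cancel f g hgf] at this
    · have hlt : n' < n := by omega
      refine ⟨n - n', by omega, ?_⟩
      have : f^[n'] (f^[n - n'] a) = f^[n'] a := by
        rw [← Function.iterate_add_apply]
        rw [show n' + (n - n') = n from by omega]
        exact heq'
      have := congrArg g^[n'] this
      rwa [iter_cancel f g hgf, iter_cancel f g hgf] at this
  set S := {e | 0 < e ∧ f^[e] a = a} with hS
  have hSne : S.Nonempty := hper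
  set e₀ := sInf S with he₀
  have he₀mem : e₀ ∈ S := Nat.sInf_mem hSne
  have hmul : ∀ q, f^[q * e₀] a = a := by
    intro q
    rw [mul_comm, Function.iterate_mul]
    exact Function.iterate_fixed he₀mem.2 q
  have hred : ∀ m, f^[m] a = f^[m % e₀] a := by
    intro m
    conv_lhs => rw [← Nat.mod_add_div' m e₀]
    rw [Function.iterate_add_apply, hmul]
  refine ⟨e₀, he₀mem.1, he₀mem.2, ?_⟩
  have himg : ThetaSet act i j a = (fun m => f^[m] a) '' (Set.Iio e₀) := by
    ext x
    constructor
    · rintro ⟨m, hm | hm⟩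
      · refine ⟨m % e₀, ?_, ?_⟩
        · exact Nat.mod_lt _ he₀mem.1
        · show f^[m % e₀] a = x
          rw [← hred, hm, altIter_eq_iter]
      · -- x = altIter act j i a m = g^[m] a = f^[m*(e₀-1)] a
        have hx : x = g^[m] a := by rw [hm, altIter_eq_iter]
        have hgm : g^[m] a = f^[m * (e₀ - 1)] a := by
          have h1 : f^[m * e₀] a = a := hmul m
          have h2 : m * e₀ = m + m * (e₀ - 1) := by
            have hpos : 0 < e₀ := he₀mem.1
            have he1 : e₀ - 1 + 1 = e₀ := by omega
            calc m * e₀ = m * (e₀ - 1 + 1) := by rw [he1]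
              _ = m + m * (e₀ - 1) := by ring
          rw [h2, Function.iterate_add_apply] at h1
          have := congrArg g^[m] h1
          rw [iter_cancel f g hgf] at this
          exact this.symm
        refine ⟨(m * (e₀ - 1)) % e₀, Nat.mod_lt _ he₀mem.1, ?_⟩
        show f^[(m * (e₀ - 1)) % e₀] a = x
        rw [← hred, hx, hgm]
    · rintro ⟨m, -, rfl⟩
      exact hmem m
  rw [himg]
  have hinj : Set.InjOn (fun m => f^[m] a) (Set.Iio e₀) := by
    intro x hx y hy hxy
    simp only [Set.mem_Iio] at hx hy
    by_contra hne'
    rcases Nat.lt_or_ge x y with h | h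
    · have : f^[x] (f^[y - x] a) = f^[x] a := by
        rw [← Function.iterate_add_apply, show x + (y - x) = y from by omega]
        exact hxy.symm
      have := congrArg g^[x] this
      rw [iter_cancel f g hgf, iter_cancel f g hgf] at this
      have : y - x ∈ S := ⟨by omega, this⟩
      have := Nat.sInf_le this
      omega
    · have hyx : y < x := by omega
      have : f^[y] (f^[x - y] a) = f^[y] a := by
        rw [← Function.iterate_add_apply, show y + (x - y) = x from by omega]
        exact hxy
      have := congrArg g^[y] this
      rw [iter_cancel f g hgf, iter_cancel f g hgf] at this
      have : x - y ∈ S := ⟨by omega, this⟩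
      have := Nat.sInf_le this
      omega
  rw [Set.ncard_image_of_injOn hinj]
  rw [← Finset.coe_range, Set.ncard_coe_finset, Finset.card_range]

end Theta

section Det

noncomputable def det2 (G : GRS N A) (i j : N) (f : (N →₀ ℝ) →ₗ[ℝ] (N →₀ ℝ)) (a b : A) : ℝ :=
  (bas G b).repr (f (G.α i a)) i * (bas G b).repr (f (G.α j a)) j -
  (bas G b).repr (f (G.α i a)) j * (bas G b).repr (f (G.α j a)) i

lemma repr_apply_comb (G : GRS N A) {i j : N} (hij : i ≠ j) (hN : ∀ n : N, n = i ∨ n = j)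
    (b t : A) (g : (N →₀ ℝ) →ₗ[ℝ] (N →₀ ℝ)) (x : N →₀ ℝ) (n : N) :
    (bas G t).repr (g x) n =
      (bas G b).repr x i * (bas G t).repr (g (G.α i b)) n +
      (bas G b).repr x j * (bas G t).repr (g (G.α j b)) n := by
  conv_lhs => rw [repr_expand G b hij hN x]
  rw [map_add, map_smul, map_smul, map_add, map_smul, map_smul]
  simp [Finsupp.add_apply, Finsupp.smul_apply]

lemma det2_comp (G : GRS N A) {i j : N} (hij : i ≠ j) (hN : ∀ n : N, n = i ∨ n = j)
    (f g : (N →₀ ℝ) →ₗ[ℝ] (N →₀ ℝ)) (a b t : A) :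
    det2 G i j (g ∘ₗ f) a t = det2 G i j g b t * det2 G i j f a b := by
  unfold det2
  rw [LinearMap.comp_apply, LinearMap.comp_apply]
  rw [repr_apply_comb G hij hN b t g (f (G.α i a)) i,
      repr_apply_comb G hij hN b t g (f (G.α i a)) j,
      repr_apply_comb G hij hN b t g (f (G.α j a)) i,
      repr_apply_comb G hij hN b t g (f (G.α j a)) j]
  ring

lemma det2_id (G : GRS N A) {i j : N} (hij : i ≠ j) (t : A) :
    det2 G i j LinearMap.id t t = 1 := by
  unfold det2
  simp [repr_α, hij, hij.symm]

lemma det2_sigma (G : GRS N A) {i j : N} (hij : i ≠ j) (hN : ∀ n : N, n = i ∨ n = j)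
    (c : N) (t : A) :
    det2 G i j (G.σ c t).toLinearMap t (G.act c t) = -1 := by
  unfold det2
  rcases hN c with rfl | rfl
  · obtain ⟨m, hm⟩ := G.ax5_off c t j hij.symm
    simp only [LinearEquiv.coe_coe]
    rw [G.ax5_diag, hm]
    rw [map_neg]
    simp only [Finsupp.neg_apply]
    rw [map_add, map_smul]
    simp only [Finsupp.add_apply, Finsupp.smul_apply]
    rw [repr_α, repr_α, repr_α, repr_α]
    simp [hij, hij.symm]
  · obtain ⟨m, hm⟩ := G.ax5_off c t i hij
    simp only [LinearEquiv.coe_coe]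
    rw [G.ax5_diag, hm]
    rw [map_neg]
    simp only [Finsupp.neg_apply]
    rw [map_add, map_smul]
    simp only [Finsupp.add_apply, Finsupp.smul_apply]
    rw [repr_α, repr_α, repr_α, repr_α]
    simp [hij, hij.symm]

lemma det2_wmap (G : GRS N A) {i j : N} (hij : i ≠ j) (hN : ∀ n : N, n = i ∨ n = j)
    (w : List N) (a : A) :
    det2 G i j (G.wmap w a).toLinearMap a (G.target w a) = (-1 : ℝ)^(w.length) := by
  induction w with
  | nil =>
    have h : (G.wmap ([] : List N) a).toLinearMap = LinearMap.id := rfl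
    rw [h]
    simpa [GRS.target] using det2_id G hij a
  | cons c w ih =>
    have h : (G.wmap (c :: w) a).toLinearMap =
        (G.σ c (G.target w a)).toLinearMap ∘ₗ (G.wmap w a).toLinearMap := rfl
    rw [h]
    rw [det2_comp G hij hN _ _ a (G.target w a) (G.target (c :: w) a)]
    rw [ih]
    have ht : G.target (c :: w) a = G.act c (G.target w a) := rfl
    rw [ht, det2_sigma G hij hN c (G.target w a)]
    simp [pow_succ]

lemma det2_symm (G : GRS N A) {i j : N} (hij : i ≠ j) (hN : ∀ n : N, n = i ∨ n = j)
    (w : List N) (a : A) :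
    det2 G i j (G.wmap w a).symm.toLinearMap (G.target w a) a = (-1 : ℝ)^(w.length) := by
  have hcomp : (G.wmap w a).toLinearMap ∘ₗ (G.wmap w a).symm.toLinearMap = LinearMap.id := by
    ext x
    simp
  have h := det2_comp G hij hN (G.wmap w a).symm.toLinearMap (G.wmap w a).toLinearMap
    (G.target w a) a (G.target w a)
  rw [hcomp, det2_id G hij, det2_wmap G hij hN w a] at h
  have hpm : (-1 : ℝ)^(w.length) = 1 ∨ (-1 : ℝ)^(w.length) = -1 := by
    rcases Nat.even_or_odd w.length with he | ho
    · exact Or.inl (Even.neg_one_pow he)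
    · exact Or.inr (Odd.neg_one_pow ho)
  rcases hpm with hp | hp
  · rw [hp] at h ⊢; linarith
  · rw [hp] at h ⊢; linarith

end Det

lemma altR_length (m : ℕ) : ∀ i j : N, (altR i j m).length = m := by
  induction m with
  | zero => intro i j; rfl
  | succ m ih =>
    intro i j
    show (altR j i m ++ [i]).length = m + 1
    rw [List.length_append, ih j i]
    rfl

lemma ax7_set_eq (G : GRS N A) {i j : N} (hN : ∀ n : N, n = i ∨ n = j) (a : A) :
    G.root a ∩ {β | ∃ p q : ℕ, β = (p : ℝ) • G.α i a + (q : ℝ) • G.α j a} = G.pos a := by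
  ext x
  rw [mem_pos G a hN]
  rfl

lemma aIter_eq_aIter (act : N → A → A) (i j : N) (a : A)
    (hinv : ∀ n x, act n (act n x) = x) (d : ℕ)
    (hfix : (fun x => act i (act j x))^[d] a = a) :
    aIter act i j a d = aIter act j i a d := by
  set f : A → A := fun x => act i (act j x) with hf
  set g : A → A := fun x => act j (act i x) with hg
  have hgf : ∀ x, g (f x) = x := by intro x; simp [hf, hg, hinv]
  rcases Nat.even_or_odd d with ⟨s, hs⟩ | ⟨s, hs⟩
  · subst hs
    have h2 : s + s = 2 * s := by ring
    rw [h2]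
    rw [aIter_two_mul act i j a s, aIter_two_mul act j i a s]
    show g^[s] a = f^[s] a
    have hfd : f^[s] (f^[s] a) = a := by
      rw [← Function.iterate_add_apply]
      exact hfix
    calc g^[s] a = g^[s] (f^[s] (f^[s] a)) := by rw [hfd]
      _ = f^[s] a := iter_cancel f g hgf s _
  · subst hs
    rw [aIter_odd act i j a s, aIter_odd act j i a s]
    rw [aIter_two_mul act i j a s, aIter_two_mul act j i a s]
    show act i (g^[s] a) = act j (f^[s] a)
    have hkey : g^[s] a = f^[s+1] a := by
      have hfd : f^[s] (f^[s+1] a) = a := by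
        rw [← Function.iterate_add_apply]
        rw [show s + (s+1) = 2*s+1 from by ring]
        exact hfix
      calc g^[s] a = g^[s] (f^[s] (f^[s+1] a)) := by rw [hfd]
        _ = f^[s+1] a := iter_cancel f g hgf s _
    rw [hkey, Function.iterate_succ_apply']
    show act i (act i (act j (f^[s] a))) = act j (f^[s] a)
    rw [hinv]

end Stmt7Aux
/-- (rank two, `d = |R⁺_a|` finite) the two alternating words of length `d`
at `a` (rightmost letter `i`, resp. `j`) have the same target and the same σ-composite. -/
theorem stmt7 [Nonempty A] (G : GRS N A) (i j : N) (hij : i ≠ j)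
    (hN : ∀ n : N, n = i ∨ n = j) (a : A) (hfin : (G.pos a).Finite) :
    G.target (altR i j (G.pos a).ncard) a = G.target (altR j i (G.pos a).ncard) a ∧
    G.wmap (altR i j (G.pos a).ncard) a = G.wmap (altR j i (G.pos a).ncard) a := by
  classical
  open Stmt7Aux in
  set d := (G.pos a).ncard with hd
  have hN' : ∀ n : N, n = j ∨ n = i := fun n => (hN n).symm
  have hfin7 : (G.root a ∩
      {β | ∃ p q : ℕ, β = (p : ℝ) • G.α i a + (q : ℝ) • G.α j a}).Finite := by
    rw [ax7_set_eq G hN a]; exact hfin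
  obtain ⟨hΘfin, hdvd⟩ := G.ax7 a i j hij hfin7
  rw [ax7_set_eq G hN a] at hdvd
  obtain ⟨e, hepos, hper, hecard⟩ := theta_period G.act i j a G.act_invol hΘfin
  rw [hecard] at hdvd
  have hfixd : (fun x => G.act i (G.act j x))^[d] a = a := by
    obtain ⟨t, ht⟩ := hdvd
    rw [← hd] at ht
    rw [ht, Function.iterate_mul]
    exact Function.iterate_fixed hper t
  have haIter : aIter G.act i j a d = aIter G.act j i a d :=
    aIter_eq_aIter G.act i j a G.act_invol d hfixd
  have htarget : G.target (altR i j d) a = G.target (altR j i d) a := by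
    rw [target_altR, target_altR, haIter]
  refine ⟨htarget, ?_⟩
  obtain ⟨h1fwd, h1bwd⟩ := endgame G hij hN a hfin
  obtain ⟨h2fwd, h2bwd⟩ := endgame G hij.symm hN' a hfin
  rw [← hd] at h1fwd h1bwd h2fwd h2bwd
  rw [← haIter] at h2fwd h2bwd
  set b := aIter G.act i j a d with hb
  set w1 := G.wmap (altR i j d) a with hw1
  set w2 := G.wmap (altR j i d) a with hw2
  have hu : ∀ y ∈ G.pos b, w2 (w1.symm y) ∈ G.pos b := by
    intro y hy
    have hx := h1bwd y hy
    have hx' : -(w1.symm y) ∈ G.pos a := Set.mem_neg.1 hx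
    have h2 := h2fwd _ hx'
    rw [map_neg] at h2
    have h3 := Set.mem_neg.1 h2
    rwa [neg_neg] at h3
  have hu' : ∀ y ∈ G.pos b, w1 (w2.symm y) ∈ G.pos b := by
    intro y hy
    have hx := h2bwd y hy
    have hx' : -(w2.symm y) ∈ G.pos a := Set.mem_neg.1 hx
    have h2 := h1fwd _ hx'
    rw [map_neg] at h2
    have h3 := Set.mem_neg.1 h2
    rwa [neg_neg] at h3
  obtain ⟨-, p, q, hpq⟩ := (mem_pos G b hN _).1 (hu _ (α_mem_pos G b i))
  obtain ⟨-, r, s, hrs⟩ := (mem_pos G b hN _).1 (hu _ (α_mem_pos G b j))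
  obtain ⟨-, p', q', hpq'⟩ := (mem_pos G b hN _).1 (hu' _ (α_mem_pos G b i))
  obtain ⟨-, r', s', hrs'⟩ := (mem_pos G b hN _).1 (hu' _ (α_mem_pos G b j))
  have hco : ∀ y, w1 (w2.symm (w2 (w1.symm y))) = y := by
    intro y; rw [LinearEquiv.symm_apply_apply, LinearEquiv.apply_symm_apply]
  have hEqi : G.α i b = ((p:ℝ)*p' + (q:ℝ)*r') • G.α i b +
      ((p:ℝ)*q' + (q:ℝ)*s') • G.α j b := by
    conv_lhs => rw [← hco (G.α i b), hpq]
    rw [map_add, map_smul, map_smul, map_add, map_smul, map_smul, hpq', hrs']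
    module
  have hEqj : G.α j b = ((r:ℝ)*p' + (s:ℝ)*r') • G.α i b +
      ((r:ℝ)*q' + (s:ℝ)*s') • G.α j b := by
    conv_lhs => rw [← hco (G.α j b), hrs]
    rw [map_add, map_smul, map_smul, map_add, map_smul, map_smul, hpq', hrs']
    module
  have hA : (p:ℝ)*p' + (q:ℝ)*r' = 1 := by
    have h := congrArg (fun v => (bas G b).repr v i) hEqi
    rw [(repr_comb G b hij _ _).1, repr_α] at h
    simpa using h.symm
  have hB : (p:ℝ)*q' + (q:ℝ)*s' = 0 := by
    have h := congrArg (fun v => (bas G b).repr v j) hEqi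
    rw [(repr_comb G b hij _ _).2, repr_α] at h
    simpa [hij] using h.symm
  have hC : (r:ℝ)*p' + (s:ℝ)*r' = 0 := by
    have h := congrArg (fun v => (bas G b).repr v i) hEqj
    rw [(repr_comb G b hij _ _).1, repr_α] at h
    simpa [hij.symm] using h.symm
  have hD : (r:ℝ)*q' + (s:ℝ)*s' = 1 := by
    have h := congrArg (fun v => (bas G b).repr v j) hEqj
    rw [(repr_comb G b hij _ _).2, repr_α] at h
    simpa using h.symm
  have hT1 : G.target (altR i j d) a = b := target_altR G i j a d
  have hT2 : G.target (altR j i d) a = b := by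
    rw [target_altR]; exact haIter.symm
  have hdet1 : det2 G i j w1.symm.toLinearMap b a = (-1:ℝ)^d := by
    have h := det2_symm G hij hN (altR i j d) a
    rw [hT1, altR_length] at h
    exact h
  have hdet2 : det2 G i j w2.toLinearMap a b = (-1:ℝ)^d := by
    have h := det2_wmap G hij hN (altR j i d) a
    rw [hT2, altR_length] at h
    exact h
  have hdetu : det2 G i j (w2.toLinearMap ∘ₗ w1.symm.toLinearMap) b b = 1 := by
    rw [det2_comp G hij hN _ _ b a b, hdet1, hdet2, ← pow_add]
    exact Even.neg_one_pow ⟨d, rfl⟩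
  have hdetu' : (p:ℝ)*s - (q:ℝ)*r = 1 := by
    unfold det2 at hdetu
    simp only [LinearMap.comp_apply, LinearEquiv.coe_coe] at hdetu
    rw [hpq, hrs] at hdetu
    rw [(repr_comb G b hij _ _).1, (repr_comb G b hij _ _).2,
      (repr_comb G b hij _ _).1, (repr_comb G b hij _ _).2] at hdetu
    exact hdetu
  -- natural number equations
  have hAn : p*p' + q*r' = 1 := by exact_mod_cast hA
  have hBn : p*q' + q*s' = 0 := by exact_mod_cast hB
  have hCn : r*p' + s*r' = 0 := by exact_mod_cast hC
  have hDn : r*q' + s*s' = 1 := by exact_mod_cast hD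
  have hEn : p*s = q*r + 1 := by
    have h : ((p*s : ℕ) : ℝ) = ((q*r + 1 : ℕ) : ℝ) := by push_cast; linarith
    exact_mod_cast h
  obtain ⟨hb1, hb2⟩ := Nat.add_eq_zero.1 hBn
  obtain ⟨hc1, hc2⟩ := Nat.add_eq_zero.1 hCn
  have hs0 : s ≠ 0 := by
    intro h0
    rw [h0, Nat.mul_zero] at hEn
    omega
  have hr'0 : r' = 0 := by
    rcases Nat.mul_eq_zero.1 hc2 with h | h
    · exact absurd h hs0
    · exact h
  have hpp' : p * p' = 1 := by
    rw [hr'0, Nat.mul_zero, Nat.add_zero] at hAn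
    exact hAn
  have hp1 : p = 1 := Nat.eq_one_of_mul_eq_one_right hpp'
  have hp'1 : p' = 1 := Nat.eq_one_of_mul_eq_one_left hpp'
  have hr0 : r = 0 := by
    rw [hp'1, Nat.mul_one] at hc1
    exact hc1
  have hs1 : s = 1 := by
    rw [hp1, Nat.one_mul, hr0, Nat.mul_zero] at hEn
    omega
  have hq'0 : q' = 0 := by
    rw [hp1, Nat.one_mul] at hb1
    exact hb1
  have hss' : s * s' = 1 := by
    rw [hr0, Nat.zero_mul, Nat.zero_add] at hDn
    exact hDn
  have hs'1 : s' = 1 := Nat.eq_one_of_mul_eq_one_left hss'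
  have hq0 : q = 0 := by
    rw [hs'1, Nat.mul_one] at hb2
    exact hb2
  have hui : w2 (w1.symm (G.α i b)) = G.α i b := by
    rw [hpq, hq0, hp1]; simp
  have huj : w2 (w1.symm (G.α j b)) = G.α j b := by
    rw [hrs, hr0, hs1]; simp
  have hmaps : w2.toLinearMap ∘ₗ w1.symm.toLinearMap = LinearMap.id := by
    apply LinearMap.ext_on (G.α_span b)
    rintro x ⟨n, rfl⟩
    rcases hN n with rfl | rfl
    · simpa using hui
    · simpa using huj
  have hptw : ∀ x, w2 (w1.symm x) = x := by
    intro x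
    have h := congrArg (fun F : (N →₀ ℝ) →ₗ[ℝ] (N →₀ ℝ) => F x) hmaps
    simpa using h
  refine LinearEquiv.ext fun x => ?_
  have h := hptw (w1 x)
  rw [LinearEquiv.symm_apply_apply] at h
  exact h.symm
end

section
/- Let a ∈ A and let i, j ∈ N with i ≠ j, and suppose m := m_{i,j;a} is finite. Then the alternating word of length m in the letters i, j whose rightmost letter is i, taken at a, has the same target and the same σ-composite as the alternating word of length m in i, j whose rightmost letter is j, taken at a. (Consequently the assignment e_a ↦ ι_a P_a, s_{i,a} ↦ ι_{i▷a} σ_{i,a} P_a defines a representation of the associated Coxeter groupoid on ⊕_{a∈A} V₀.) -/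
open Pointwise

variable {N : Type*} {A : Type*}

namespace Stmt8
variable {N : Type*} {A : Type*}

noncomputable def bas (G : GRS N A) (b : A) : Module.Basis N ℝ (N →₀ ℝ) :=
  Module.Basis.mk (G.α_indep b) (by rw [G.α_span])

noncomputable def rp (G : GRS N A) (b : A) (v : N →₀ ℝ) (n : N) : ℝ :=
  (bas G b).repr v n

lemma α_eq_bas (G : GRS N A) (b : A) (k : N) : G.α k b = bas G b k :=
  (Module.Basis.mk_apply (G.α_indep b) _ k).symm

lemma rp_α_self (G : GRS N A) (b : A) (k : N) : rp G b (G.α k b) k = 1 := by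
  unfold rp
  rw [α_eq_bas, Module.Basis.repr_self, Finsupp.single_eq_same]

lemma rp_α_ne (G : GRS N A) (b : A) {k n : N} (h : k ≠ n) : rp G b (G.α k b) n = 0 := by
  unfold rp
  rw [α_eq_bas, Module.Basis.repr_self, Finsupp.single_eq_of_ne h.symm]

lemma rp_add (G : GRS N A) (b : A) (v w : N →₀ ℝ) (n : N) :
    rp G b (v + w) n = rp G b v n + rp G b w n := by
  simp [rp, map_add]

lemma rp_smul (G : GRS N A) (b : A) (r : ℝ) (v : N →₀ ℝ) (n : N) :
    rp G b (r • v) n = r * rp G b v n := by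
  simp [rp, map_smul]

lemma rp_neg (G : GRS N A) (b : A) (v : N →₀ ℝ) (n : N) : rp G b (-v) n = - rp G b v n := by
  simp [rp, map_neg]

lemma rp_zero (G : GRS N A) (b : A) (n : N) : rp G b 0 n = 0 := by simp [rp]

/-- `p • α_i + q • α_j` at `b`. -/
noncomputable def cmb (G : GRS N A) (i j : N) (b : A) (p q : ℝ) : N →₀ ℝ :=
  p • G.α i b + q • G.α j b

lemma cmb_comm (G : GRS N A) (i j : N) (b : A) (p q : ℝ) :
    cmb G i j b p q = cmb G j i b q p := add_comm _ _

lemma rp_cmb_i (G : GRS N A) {i j : N} (hij : i ≠ j) (b : A) (p q : ℝ) :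
    rp G b (cmb G i j b p q) i = p := by
  rw [cmb, rp_add, rp_smul, rp_smul, rp_α_self, rp_α_ne G b hij.symm]
  ring

lemma rp_cmb_j (G : GRS N A) {i j : N} (hij : i ≠ j) (b : A) (p q : ℝ) :
    rp G b (cmb G i j b p q) j = q := by
  rw [cmb, rp_add, rp_smul, rp_smul, rp_α_self, rp_α_ne G b hij]
  ring

lemma rp_cmb_other (G : GRS N A) {i j n : N} (hi : i ≠ n) (hj : j ≠ n) (b : A) (p q : ℝ) :
    rp G b (cmb G i j b p q) n = 0 := by
  rw [cmb, rp_add, rp_smul, rp_smul, rp_α_ne G b hi, rp_α_ne G b hj]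
  ring

/-- The set `R_b ∩ (ℕ₀ α_i + ℕ₀ α_j)`. -/
def cone (G : GRS N A) (i j : N) (b : A) : Set (N →₀ ℝ) :=
  G.root b ∩ {β | ∃ p q : ℕ, β = (p : ℝ) • G.α i b + (q : ℝ) • G.α j b}

lemma cone_comm (G : GRS N A) (i j : N) (b : A) : cone G i j b = cone G j i b := by
  ext β
  constructor <;> rintro ⟨h1, p, q, rfl⟩ <;> exact ⟨h1, q, p, add_comm _ _⟩

lemma cone_root (G : GRS N A) {i j : N} {b : A} {β : N →₀ ℝ} (h : β ∈ cone G i j b) :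
    β ∈ G.root b := h.1

lemma α_mem_cone_i (G : GRS N A) (i j : N) (b : A) : G.α i b ∈ cone G i j b := by
  refine ⟨G.α_mem i b, 1, 0, ?_⟩
  push_cast
  module

lemma α_mem_cone_j (G : GRS N A) (i j : N) (b : A) : G.α j b ∈ cone G i j b := by
  rw [cone_comm]; exact α_mem_cone_i G j i b

lemma cone_cmb (G : GRS N A) {i j : N} {b : A} {β : N →₀ ℝ} (h : β ∈ cone G i j b) :
    ∃ p q : ℝ, 0 ≤ p ∧ 0 ≤ q ∧ β = cmb G i j b p q := by
  obtain ⟨-, p, q, rfl⟩ := h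
  exact ⟨p, q, by positivity, by positivity, rfl⟩

lemma NSpan_nonneg (G : GRS N A) (b : A) {v : N →₀ ℝ}
    (h : v ∈ NSpan (Set.range fun n => G.α n b)) (n : N) : 0 ≤ rp G b v n := by
  have h' : v ∈ AddSubmonoid.closure (Set.range fun n => G.α n b) := h
  induction h' using AddSubmonoid.closure_induction with
  | mem x hx =>
    obtain ⟨k, rfl⟩ := hx
    rcases eq_or_ne k n with rfl | hk
    · rw [show (fun n => G.α n b) k = G.α k b from rfl, rp_α_self]; norm_num
    · rw [show (fun n => G.α n b) k = G.α k b from rfl, rp_α_ne G b hk]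
  | zero => rw [rp_zero]
  | add x y hx hy ihx ihy => rw [rp_add]; exact add_nonneg (ihx hx) (ihy hy)

lemma root_sign (G : GRS N A) {b : A} {β : N →₀ ℝ} (h : β ∈ G.root b) :
    (∀ n, 0 ≤ rp G b β n) ∨ (∀ n, rp G b β n ≤ 0) := by
  rw [G.ax3 b] at h
  rcases h with h | h
  · exact Or.inl fun n => NSpan_nonneg G b h.2 n
  · refine Or.inr fun n => ?_
    rw [Set.mem_neg] at h
    have := NSpan_nonneg G b h.2 n
    rw [rp_neg] at this
    linarith

lemma root_nonneg (G : GRS N A) {b : A} {β : N →₀ ℝ} (h : β ∈ G.root b) {n0 : N}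
    (h0 : 0 < rp G b β n0) (n : N) : 0 ≤ rp G b β n := by
  rcases root_sign G h with hs | hs
  · exact hs n
  · linarith [hs n0]

lemma cone_j0 (G : GRS N A) {i j : N} (hij : i ≠ j) {b : A} {β : N →₀ ℝ}
    (h : β ∈ cone G i j b) (h0 : rp G b β j = 0) : β = G.α i b := by
  obtain ⟨hr, p, q, rfl⟩ := h
  have hq : (q : ℝ) = 0 := by
    have h2 := rp_cmb_j G hij b (p : ℝ) (q : ℝ)
    rw [cmb] at h2
    rw [h2] at h0
    exact h0
  rw [hq] at hr ⊢
  have hmem : (p : ℝ) • G.α i b + (0:ℝ) • G.α j b ∈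
      (Set.range fun r : ℝ => r • G.α i b) ∩ G.root b := by
    refine ⟨⟨(p:ℝ), ?_⟩, hr⟩
    module
  rw [G.ax4 i b] at hmem
  simp only [Set.mem_insert_iff, Set.mem_singleton_iff] at hmem
  rcases hmem with hmem | hmem
  · rw [hmem]
  · exfalso
    have h1 : rp G b ((p : ℝ) • G.α i b + (0:ℝ) • G.α j b) i = (p : ℝ) := by
      have := rp_cmb_i G hij b (p : ℝ) (0 : ℝ)
      rwa [cmb] at this
    rw [hmem] at h1
    rw [rp_neg, rp_α_self] at h1
    have hp : (0:ℝ) ≤ (p:ℝ) := by positivity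
    linarith

lemma cone_i0 (G : GRS N A) {i j : N} (hij : i ≠ j) {b : A} {β : N →₀ ℝ}
    (h : β ∈ cone G i j b) (h0 : rp G b β i = 0) : β = G.α j b := by
  rw [cone_comm] at h
  exact cone_j0 G hij.symm h h0

end Stmt8

namespace Stmt8
variable {N : Type*} {A : Type*}

lemma sigma_off (G : GRS N A) {i j : N} (hij : i ≠ j) (b : A) :
    ∃ c : ℕ, G.σ i b (G.α j b) = G.α j (G.act i b) + (c : ℝ) • G.α i (G.act i b) :=
  G.ax5_off i b j (Ne.symm hij)

lemma sigma_cmb (G : GRS N A) {i j : N} (b : A) {c : ℕ}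
    (hc : G.σ i b (G.α j b) = G.α j (G.act i b) + (c : ℝ) • G.α i (G.act i b)) (p q : ℝ) :
    G.σ i b (cmb G i j b p q) = cmb G i j (G.act i b) (q * c - p) q := by
  rw [cmb, map_add, map_smul, map_smul, G.ax5_diag, hc, cmb]
  module

lemma sigma_sigma (G : GRS N A) (i : N) (b : A) (v : N →₀ ℝ) :
    G.σ i b (G.σ i (G.act i b) v) = v := by
  have h := G.ax6 i (G.act i b) v
  rwa [G.act_invol] at h

lemma sigma_root (G : GRS N A) {i : N} {b : A} {β : N →₀ ℝ} (h : β ∈ G.root b) :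
    G.σ i b β ∈ G.root (G.act i b) := by
  rw [← G.ax5_root]
  exact ⟨β, h, rfl⟩

lemma cone_step (G : GRS N A) {i j : N} (hij : i ≠ j) {b : A} {β : N →₀ ℝ}
    (hβ : β ∈ cone G i j b) (hne : β ≠ G.α i b) :
    G.σ i b β ∈ cone G i j (G.act i b) ∧ G.σ i b β ≠ G.α i (G.act i b) ∧
      rp G (G.act i b) (G.σ i b β) j = rp G b β j := by
  obtain ⟨c, hc⟩ := sigma_off G hij b
  obtain ⟨hr, p, q, hβeq⟩ := hβ
  have hβc : β = cmb G i j b (p : ℝ) (q : ℝ) := hβeq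
  have hq0 : q ≠ 0 := by
    rintro rfl
    exact hne (cone_j0 G hij ⟨hr, p, 0, hβeq⟩ (by rw [hβc, rp_cmb_j G hij]; norm_num))
  have hqpos : (0 : ℝ) < q := by exact_mod_cast Nat.pos_of_ne_zero hq0
  have himg : G.σ i b β = cmb G i j (G.act i b) ((q : ℝ) * c - p) q := by
    rw [hβc, sigma_cmb G b hc]
  have hroot' : G.σ i b β ∈ G.root (G.act i b) := sigma_root G hr
  have hrpj : rp G (G.act i b) (G.σ i b β) j = (q : ℝ) := by
    rw [himg, rp_cmb_j G hij]
  have hnn : 0 ≤ (q : ℝ) * c - p := by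
    have h0 : 0 < rp G (G.act i b) (G.σ i b β) j := by rw [hrpj]; exact hqpos
    have := root_nonneg G hroot' h0 i
    rwa [himg, rp_cmb_i G hij] at this
  have hple : p ≤ q * c := by
    have : (p : ℝ) ≤ (q : ℝ) * c := by linarith
    exact_mod_cast this
  refine ⟨⟨hroot', q * c - p, q, ?_⟩, ?_, ?_⟩
  · rw [himg, cmb]
    push_cast [Nat.cast_sub hple]
    ring_nf
  · intro hcon
    have := hrpj
    rw [hcon, rp_α_ne G _ hij] at this
    exact hq0 (by exact_mod_cast this.symm)
  · rw [hrpj, hβc, rp_cmb_j G hij]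

lemma cone_diff_image (G : GRS N A) {i j : N} (hij : i ≠ j) (b : A) :
    G.σ i b '' (cone G i j b \ {G.α i b}) =
      cone G i j (G.act i b) \ {G.α i (G.act i b)} := by
  apply Set.Subset.antisymm
  · rintro - ⟨β, ⟨hβ, hne⟩, rfl⟩
    have h := cone_step G hij hβ (by simpa using hne)
    exact ⟨h.1, h.2.1⟩
  · rintro y ⟨hy, hne⟩
    have hy' : G.σ i (G.act i b) y ∈ cone G i j (G.act i (G.act i b)) ∧
        G.σ i (G.act i b) y ≠ G.α i (G.act i (G.act i b)) ∧ _ :=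
      cone_step G hij hy (by simpa using hne)
    refine ⟨G.σ i (G.act i b) y, ⟨?_, ?_⟩, sigma_sigma G i b y⟩
    · have h1 := hy'.1
      rwa [G.act_invol] at h1
    · have h2 := hy'.2.1
      rw [G.act_invol] at h2
      simpa using h2

lemma cone_insert (G : GRS N A) {i j : N} (hij : i ≠ j) (b : A) :
    cone G i j (G.act i b) =
      insert (G.α i (G.act i b)) (G.σ i b '' (cone G i j b \ {G.α i b})) := by
  rw [cone_diff_image G hij b, Set.insert_diff_singleton,
    Set.insert_eq_self.mpr (α_mem_cone_i G i j (G.act i b))]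

lemma cone_finite_step (G : GRS N A) {i j : N} (hij : i ≠ j) {b : A}
    (hfin : (cone G i j b).Finite) : (cone G i j (G.act i b)).Finite := by
  rw [cone_insert G hij b]
  exact ((hfin.diff).image _).insert _

lemma cone_ncard_step (G : GRS N A) {i j : N} (hij : i ≠ j) {b : A}
    (hfin : (cone G i j b).Finite) :
    (cone G i j (G.act i b)).ncard = (cone G i j b).ncard := by
  have h1 : G.α i (G.act i b) ∉ G.σ i b '' (cone G i j b \ {G.α i b}) := by
    rw [cone_diff_image G hij b]
    exact fun h => h.2 rfl
  have h2 : G.α i b ∈ cone G i j b := α_mem_cone_i G i j b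
  rw [cone_insert G hij b,
    Set.ncard_insert_of_notMem h1 ((hfin.diff).image _),
    Set.ncard_image_of_injective _ (G.σ i b).injective,
    Set.ncard_diff_singleton_of_mem h2]
  have hpos : 0 < (cone G i j b).ncard := by
    rw [Set.ncard_pos hfin]
    exact ⟨_, h2⟩
  omega

end Stmt8

namespace Stmt8
variable {N : Type*} {A : Type*}

def el (i j : N) (k : ℕ) : N := if k % 2 = 0 then i else j

lemma el_succ (i j : N) (k : ℕ) : el i j (k+1) = el j i k := by
  unfold el
  rcases Nat.mod_two_eq_zero_or_one k with h | h
  · have h2 : (k+1) % 2 = 1 := by omega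
    rw [h, h2]; simp
  · have h2 : (k+1) % 2 = 0 := by omega
    rw [h, h2]; simp

lemma el_even {k : ℕ} (h : k % 2 = 0) (i j : N) : el i j k = i := by simp [el, h]

lemma el_odd {k : ℕ} (h : k % 2 = 1) (i j : N) : el i j k = j := by simp [el, h]

lemma aIter_succ (act : N → A → A) (i j : N) (a : A) (k : ℕ) :
    aIter act i j a (k+1) = act (el i j k) (aIter act i j a k) := rfl

lemma aIter_shift (act : N → A → A) :
    ∀ (k : ℕ) (i j : N) (a : A), aIter act i j a (k+1) = aIter act j i (act i a) k := by
  intro k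
  induction k with
  | zero => intro i j a; simp [aIter]
  | succ k ih =>
    intro i j a
    show act (el i j (k+1)) (aIter act i j a (k+1)) = aIter act j i (act i a) (k+1)
    rw [ih i j a, el_succ, aIter_succ act j i (act i a) k]

noncomputable def WW (G : GRS N A) (i j : N) (a : A) : ℕ → (N →₀ ℝ) ≃ₗ[ℝ] (N →₀ ℝ)
  | 0 => LinearEquiv.refl ℝ _
  | k+1 => (WW G i j a k).trans (G.σ (el i j k) (aIter G.act i j a k))

lemma WW_succ (G : GRS N A) (i j : N) (a : A) (k : ℕ) :
    WW G i j a (k+1) = (WW G i j a k).trans (G.σ (el i j k) (aIter G.act i j a k)) := rfl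

noncomputable def SS (G : GRS N A) (i j : N) (a : A) : ℕ → Set (N →₀ ℝ)
  | 0 => ∅
  | k+1 => G.σ (el i j k) (aIter G.act i j a k) '' SS G i j a k ∪
      {G.α (el i j k) (aIter G.act i j a (k+1))}

lemma SS_succ (G : GRS N A) (i j : N) (a : A) (k : ℕ) :
    SS G i j a (k+1) = G.σ (el i j k) (aIter G.act i j a k) '' SS G i j a k ∪
      {G.α (el i j k) (aIter G.act i j a (k+1))} := rfl

lemma target_append (G : GRS N A) (l1 l2 : List N) (a : A) :
    G.target (l1 ++ l2) a = G.target l1 (G.target l2 a) := by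
  simp [GRS.target, List.foldr_append]

lemma wmap_append (G : GRS N A) :
    ∀ (l1 l2 : List N) (a : A),
      G.wmap (l1 ++ l2) a = (G.wmap l2 a).trans (G.wmap l1 (G.target l2 a)) := by
  intro l1
  induction l1 with
  | nil =>
    intro l2 a
    show G.wmap l2 a = (G.wmap l2 a).trans (LinearEquiv.refl ℝ _)
    rw [LinearEquiv.trans_refl]
  | cons x l ih =>
    intro l2 a
    show (G.wmap (l ++ l2) a).trans (G.σ x (G.target (l ++ l2) a)) = _
    rw [ih, target_append]
    show _ = (G.wmap l2 a).trans ((G.wmap l (G.target l2 a)).trans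
      (G.σ x (G.target l (G.target l2 a))))
    apply LinearEquiv.toLinearMap_injective
    rfl

lemma target_altR (G : GRS N A) :
    ∀ (m : ℕ) (i j : N) (a : A), G.target (altR i j m) a = aIter G.act i j a m := by
  intro m
  induction m with
  | zero => intro i j a; rfl
  | succ m ih =>
    intro i j a
    show G.target (altR j i m ++ [i]) a = _
    rw [target_append, show G.target [i] a = G.act i a from rfl, ih j i (G.act i a),
      aIter_shift]

lemma WW_shift (G : GRS N A) :
    ∀ (m : ℕ) (i j : N) (a : A),
      WW G i j a (m+1) = (G.σ i a).trans (WW G j i (G.act i a) m) := by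
  intro m
  induction m with
  | zero =>
    intro i j a
    show (LinearEquiv.refl ℝ _).trans (G.σ (el i j 0) (aIter G.act i j a 0)) = _
    have : el i j 0 = i := by simp [el]
    rw [this]
    show (LinearEquiv.refl ℝ _).trans (G.σ i a) = (G.σ i a).trans (LinearEquiv.refl ℝ _)
    rw [LinearEquiv.trans_refl, LinearEquiv.refl_trans]
  | succ m ih =>
    intro i j a
    rw [WW_succ, ih i j a, el_succ, aIter_shift, WW_succ]
    apply LinearEquiv.toLinearMap_injective
    rfl

lemma wmap_altR (G : GRS N A) :
    ∀ (m : ℕ) (i j : N) (a : A), G.wmap (altR i j m) a = WW G i j a m := by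
  intro m
  induction m with
  | zero => intro i j a; rfl
  | succ m ih =>
    intro i j a
    show G.wmap (altR j i m ++ [i]) a = _
    rw [wmap_append, show G.target [i] a = G.act i a from rfl, ih j i (G.act i a),
      WW_shift]
    congr 1

/-- cross product in coordinates `(x,y)` at `b`. -/
noncomputable def crs (G : GRS N A) (x y : N) (b : A) (u v : N →₀ ℝ) : ℝ :=
  rp G b u x * rp G b v y - rp G b u y * rp G b v x

lemma crs_swap (G : GRS N A) (x y : N) (b : A) (u v : N →₀ ℝ) :
    crs G x y b u v = - crs G y x b u v := by
  unfold crs; ring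

lemma crs_cmb (G : GRS N A) {i j : N} (hij : i ≠ j) (b : A) (p q p' q' : ℝ) :
    crs G i j b (cmb G i j b p q) (cmb G i j b p' q') = p * q' - q * p' := by
  unfold crs
  rw [rp_cmb_i G hij, rp_cmb_j G hij, rp_cmb_i G hij, rp_cmb_j G hij]

lemma crs_flip (G : GRS N A) {i j : N} (hij : i ≠ j) (b : A) {c : ℕ}
    (hc : G.σ i b (G.α j b) = G.α j (G.act i b) + (c : ℝ) • G.α i (G.act i b))
    (p q p' q' : ℝ) :
    crs G i j (G.act i b) (G.σ i b (cmb G i j b p q)) (G.σ i b (cmb G i j b p' q')) =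
      - crs G i j b (cmb G i j b p q) (cmb G i j b p' q') := by
  rw [sigma_cmb G b hc, sigma_cmb G b hc, crs_cmb G hij, crs_cmb G hij]
  ring

end Stmt8

namespace Stmt8
variable {N : Type*} {A : Type*}

lemma cone_rp_j_nonneg (G : GRS N A) {i j : N} (hij : i ≠ j) {b : A} {v : N →₀ ℝ}
    (h : v ∈ cone G i j b) : 0 ≤ rp G b v j := by
  obtain ⟨p, q, hp, hq, rfl⟩ := cone_cmb G h
  rw [rp_cmb_j G hij]; exact hq

lemma cone_rp_i_nonneg (G : GRS N A) {i j : N} (hij : i ≠ j) {b : A} {v : N →₀ ℝ}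
    (h : v ∈ cone G i j b) : 0 ≤ rp G b v i := by
  obtain ⟨p, q, hp, hq, rfl⟩ := cone_cmb G h
  rw [rp_cmb_i G hij]; exact hp

lemma step_all (G : GRS N A) {i j : N} (hij : i ≠ j) {b : A}
    (hfin : (cone G i j b).Finite) {S : Set (N →₀ ℝ)}
    (hsub : S ⊆ cone G i j b) (hlt : S.ncard < (cone G i j b).ncard)
    (hUC : ∀ u ∈ S, ∀ v ∈ cone G i j b, 0 ≤ crs G i j b u v → v ∈ S)
    {C : Set (N →₀ ℝ)} {W : (N →₀ ℝ) ≃ₗ[ℝ] (N →₀ ℝ)}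
    (hsem : ∀ β ∈ C, W β ∈ -S ∨ W β ∈ cone G i j b \ S) :
    G.α i b ∉ S ∧
    (G.σ i b '' S ∪ {G.α i (G.act i b)}) ⊆ cone G i j (G.act i b) ∧
    (G.σ i b '' S ∪ {G.α i (G.act i b)}).ncard = S.ncard + 1 ∧
    (∀ u ∈ G.σ i b '' S ∪ {G.α i (G.act i b)}, ∀ v ∈ cone G i j (G.act i b),
      0 ≤ crs G j i (G.act i b) u v → v ∈ G.σ i b '' S ∪ {G.α i (G.act i b)}) ∧
    (∀ β ∈ C, W.trans (G.σ i b) β ∈ -(G.σ i b '' S ∪ {G.α i (G.act i b)}) ∨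
      W.trans (G.σ i b) β ∈ cone G i j (G.act i b) \ (G.σ i b '' S ∪ {G.α i (G.act i b)})) := by
  have hne : S ≠ cone G i j b := by
    intro h; rw [h] at hlt; exact lt_irrefl _ hlt
  have hαS : G.α i b ∉ S := by
    intro hin
    apply hne
    apply Set.Subset.antisymm hsub
    intro v hv
    apply hUC _ hin v hv
    have he : crs G i j b (G.α i b) v = rp G b v j := by
      unfold crs
      rw [rp_α_self, rp_α_ne G b hij]; ring
    rw [he]; exact cone_rp_j_nonneg G hij hv
  have hcs : ∀ u ∈ S, G.σ i b u ∈ cone G i j (G.act i b) ∧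
      G.σ i b u ≠ G.α i (G.act i b) ∧
      rp G (G.act i b) (G.σ i b u) j = rp G b u j := by
    intro u hu
    exact cone_step G hij (hsub hu) (fun h => hαS (h ▸ hu))
  have hnotmem : G.α i (G.act i b) ∉ G.σ i b '' S := by
    rintro ⟨u0, hu0, heq⟩
    exact (hcs u0 hu0).2.1 heq
  have hsub' : (G.σ i b '' S ∪ {G.α i (G.act i b)}) ⊆ cone G i j (G.act i b) := by
    intro u hu
    rcases hu with ⟨u0, hu0, rfl⟩ | hu
    · exact (hcs u0 hu0).1
    · rw [Set.mem_singleton_iff] at hu; subst hu; exact α_mem_cone_i G i j (G.act i b)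
  obtain ⟨c, hc⟩ := sigma_off G hij b
  refine ⟨hαS, hsub', ?_, ?_, ?_⟩
  · rw [Set.union_singleton, Set.ncard_insert_of_notMem hnotmem ((hfin.subset hsub).image _),
      Set.ncard_image_of_injective _ (G.σ i b).injective]
  · intro u hu v hv hcrs
    rcases hu with ⟨u0, hu0, rfl⟩ | hu
    · by_cases hv' : v = G.α i (G.act i b)
      · right; rw [Set.mem_singleton_iff]; exact hv'
      · have hvim : v ∈ G.σ i b '' (cone G i j b \ {G.α i b}) := by
          rw [cone_diff_image G hij b]
          exact ⟨hv, hv'⟩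
        obtain ⟨v0, ⟨hv0c, hv0ne⟩, rfl⟩ := hvim
        obtain ⟨p, q, hp, hq, hu0e⟩ := cone_cmb G (hsub hu0)
        obtain ⟨p', q', hp', hq', hv0e⟩ := cone_cmb G hv0c
        have hkey : 0 ≤ crs G i j b u0 v0 := by
          rw [crs_swap] at hcrs
          have hfl : crs G i j (G.act i b) (G.σ i b u0) (G.σ i b v0) =
              - crs G i j b u0 v0 := by
            rw [hu0e, hv0e]
            exact crs_flip G hij b hc p q p' q'
          rw [hfl] at hcrs
          linarith
        exact Or.inl ⟨v0, hUC u0 hu0 v0 hv0c hkey, rfl⟩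
    · rw [Set.mem_singleton_iff] at hu; subst hu
      have he : crs G j i (G.act i b) (G.α i (G.act i b)) v = - rp G (G.act i b) v j := by
        unfold crs
        rw [rp_α_self, rp_α_ne G _ hij]; ring
      rw [he] at hcrs
      have h0 : rp G (G.act i b) v j = 0 :=
        le_antisymm (by linarith) (cone_rp_j_nonneg G hij hv)
      right
      rw [Set.mem_singleton_iff]
      exact cone_j0 G hij hv h0
  · intro β hβ
    rcases hsem β hβ with h | h
    · left
      rw [Set.mem_neg]
      have : -(W.trans (G.σ i b) β) = G.σ i b (-(W β)) := by
        show -(G.σ i b (W β)) = _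
        rw [map_neg]
      rw [this]
      exact Or.inl ⟨-(W β), Set.mem_neg.mp h, rfl⟩
    · by_cases hδ : W β = G.α i b
      · left
        rw [Set.mem_neg]
        have : -(W.trans (G.σ i b) β) = G.α i (G.act i b) := by
          show -(G.σ i b (W β)) = _
          rw [hδ, G.ax5_diag]
          simp
        rw [this]
        exact Or.inr rfl
      · right
        have hcs2 := cone_step G hij h.1 hδ
        refine ⟨hcs2.1, ?_⟩
        rintro (⟨s0, hs0, heq⟩ | hsing)
        · exact h.2 ((G.σ i b).injective heq ▸ hs0)
        · rw [Set.mem_singleton_iff] at hsing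
          exact hcs2.2.1 hsing

def INV (G : GRS N A) (i j : N) (a : A) (M k : ℕ) : Prop :=
  (cone G i j (aIter G.act i j a k)).Finite ∧
  (cone G i j (aIter G.act i j a k)).ncard = M ∧
  SS G i j a k ⊆ cone G i j (aIter G.act i j a k) ∧
  (SS G i j a k).ncard = k ∧
  (∀ u ∈ SS G i j a k, ∀ v ∈ cone G i j (aIter G.act i j a k),
    0 ≤ crs G (el i j k) (el j i k) (aIter G.act i j a k) u v → v ∈ SS G i j a k) ∧
  (∀ β ∈ cone G i j a, WW G i j a k β ∈ -(SS G i j a k) ∨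
    WW G i j a k β ∈ cone G i j (aIter G.act i j a k) \ SS G i j a k)

lemma master (G : GRS N A) {i j : N} (hij : i ≠ j) (a : A)
    (hfinA : (cone G i j a).Finite) :
    ∀ k, k ≤ (cone G i j a).ncard → INV G i j a ((cone G i j a).ncard) k := by
  intro k
  induction k with
  | zero =>
    intro _
    refine ⟨hfinA, rfl, by simp [SS], by simp [SS], ?_, ?_⟩
    · intro u hu; exact absurd hu (by simp [SS])
    · intro β hβ
      right
      refine ⟨?_, by simp [SS]⟩
      show β ∈ cone G i j a
      exact hβ
  | succ k ih =>
    intro hk1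
    obtain ⟨hfin, hnc, hsub, hSnc, hUC, hsem⟩ := ih (le_of_lt hk1)
    have hlt : (SS G i j a k).ncard < (cone G i j (aIter G.act i j a k)).ncard := by
      rw [hSnc, hnc]; exact hk1
    rcases Nat.mod_two_eq_zero_or_one k with hk | hk
    · -- even step: letter i
      have hx : el i j k = i := el_even hk i j
      have hy : el j i k = j := el_even hk j i
      have hb1 : aIter G.act i j a (k+1) = G.act i (aIter G.act i j a k) := by
        rw [aIter_succ, hx]
      have hUC2 : ∀ u ∈ SS G i j a k, ∀ v ∈ cone G i j (aIter G.act i j a k),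
          0 ≤ crs G i j (aIter G.act i j a k) u v → v ∈ SS G i j a k := by
        have h := hUC; rwa [hx, hy] at h
      obtain ⟨hα, hsub', hnc', hUC', hsem'⟩ := step_all G hij hfin hsub hlt hUC2 hsem
      refine ⟨?_, ?_, ?_, ?_, ?_, ?_⟩
      · rw [hb1]; exact cone_finite_step G hij hfin
      · rw [hb1, cone_ncard_step G hij hfin]; exact hnc
      · rw [SS_succ, hx, hb1]; exact hsub'
      · rw [SS_succ, hx, hb1, hnc', hSnc]
      · rw [SS_succ, hx, hb1, el_succ, el_succ, hx, hy]; exact hUC'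
      · rw [SS_succ, hx, hb1, WW_succ, hx]; exact hsem'
    · -- odd step: letter j
      have hx : el i j k = j := el_odd hk i j
      have hy : el j i k = i := el_odd hk j i
      have hb1 : aIter G.act i j a (k+1) = G.act j (aIter G.act i j a k) := by
        rw [aIter_succ, hx]
      have hfinJ : (cone G j i (aIter G.act i j a k)).Finite := by
        rw [← cone_comm G i j (aIter G.act i j a k)]; exact hfin
      have hsubJ : SS G i j a k ⊆ cone G j i (aIter G.act i j a k) := by
        rw [← cone_comm G i j (aIter G.act i j a k)]; exact hsub
      have hltJ : (SS G i j a k).ncard < (cone G j i (aIter G.act i j a k)).ncard := by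
        rw [← cone_comm G i j (aIter G.act i j a k)]; exact hlt
      have hUC2 : ∀ u ∈ SS G i j a k, ∀ v ∈ cone G j i (aIter G.act i j a k),
          0 ≤ crs G j i (aIter G.act i j a k) u v → v ∈ SS G i j a k := by
        have h := hUC; rw [hx, hy] at h
        rw [← cone_comm G i j (aIter G.act i j a k)]; exact h
      have hsemJ : ∀ β ∈ cone G i j a, WW G i j a k β ∈ -(SS G i j a k) ∨
          WW G i j a k β ∈ cone G j i (aIter G.act i j a k) \ SS G i j a k := by
        rw [← cone_comm G i j (aIter G.act i j a k)]; exact hsem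
      obtain ⟨hα, hsub', hnc', hUC', hsem'⟩ := step_all G hij.symm hfinJ hsubJ hltJ hUC2 hsemJ
      refine ⟨?_, ?_, ?_, ?_, ?_, ?_⟩
      · rw [hb1, cone_comm G i j (G.act j (aIter G.act i j a k))]
        exact cone_finite_step G hij.symm hfinJ
      · rw [hb1, cone_comm G i j (G.act j (aIter G.act i j a k)),
          cone_ncard_step G hij.symm hfinJ, ← cone_comm G i j (aIter G.act i j a k)]
        exact hnc
      · rw [SS_succ, hx, hb1, cone_comm G i j (G.act j (aIter G.act i j a k))]; exact hsub'
      · rw [SS_succ, hx, hb1, hnc', hSnc]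
      · rw [SS_succ, hx, hb1, el_succ, el_succ, hx, hy,
          cone_comm G i j (G.act j (aIter G.act i j a k))]
        exact hUC'
      · rw [SS_succ, hx, hb1, WW_succ, hx,
          cone_comm G i j (G.act j (aIter G.act i j a k))]
        exact hsem'

end Stmt8

namespace Stmt8
variable {N : Type*} {A : Type*}

lemma rp_sub (G : GRS N A) (b : A) (u v : N →₀ ℝ) (n : N) :
    rp G b (u - v) n = rp G b u n - rp G b v n := by
  simp [rp, map_sub]

lemma cmb_alpha_i (G : GRS N A) (i j : N) (b : A) : cmb G i j b 1 0 = G.α i b := by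
  rw [cmb]; module

lemma cmb_alpha_j (G : GRS N A) (i j : N) (b : A) : cmb G i j b 0 1 = G.α j b := by
  rw [cmb]; module

variable (G : GRS N A) {i j : N} (hij : i ≠ j) (a : A) (hfinA : (cone G i j a).Finite)

lemma cor_fin (hij : i ≠ j) (hfinA : (cone G i j a).Finite) : (cone G i j (aIter G.act i j a ((cone G i j a).ncard))).Finite :=
  (master G hij a hfinA _ le_rfl).1

lemma cor_nc (hij : i ≠ j) (hfinA : (cone G i j a).Finite) :
    (cone G i j (aIter G.act i j a ((cone G i j a).ncard))).ncard = (cone G i j a).ncard :=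
  (master G hij a hfinA _ le_rfl).2.1

lemma cor_SS_eq (hij : i ≠ j) (hfinA : (cone G i j a).Finite) :
    SS G i j a ((cone G i j a).ncard) =
      cone G i j (aIter G.act i j a ((cone G i j a).ncard)) := by
  obtain ⟨hfin, hnc, hsub, hSnc, -, -⟩ := master G hij a hfinA _ le_rfl
  exact Set.eq_of_subset_of_ncard_le hsub (by rw [hnc, hSnc]) hfin

lemma cor_flip (hij : i ≠ j) (hfinA : (cone G i j a).Finite) : ∀ β ∈ cone G i j a,
    WW G i j a ((cone G i j a).ncard) β ∈
      -(cone G i j (aIter G.act i j a ((cone G i j a).ncard))) := by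
  intro β hβ
  obtain ⟨hfin, hnc, hsub, hSnc, -, hsem⟩ := master G hij a hfinA _ le_rfl
  have h := hsem β hβ
  rw [cor_SS_eq G a hij hfinA] at h
  rcases h with h | h
  · exact h
  · exact absurd h.1 (fun hc => h.2 hc)

lemma cor_img (hij : i ≠ j) (hfinA : (cone G i j a).Finite) :
    WW G i j a ((cone G i j a).ncard) '' cone G i j a =
      -(cone G i j (aIter G.act i j a ((cone G i j a).ncard))) := by
  apply Set.eq_of_subset_of_ncard_le
  · rintro - ⟨β, hβ, rfl⟩
    exact cor_flip G a hij hfinA β hβ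
  · rw [Set.ncard_neg, cor_nc G a hij hfinA,
      Set.ncard_image_of_injective _ (WW G i j a ((cone G i j a).ncard)).injective]
  · exact (cor_fin G a hij hfinA).neg


lemma WW_cmb (G : GRS N A) {i j : N} (hij : i ≠ j) (a : A) :
    ∀ k, ∃ m11 m12 m21 m22 : ℝ,
      (∀ p q : ℝ, WW G i j a k (cmb G i j a p q) =
        cmb G i j (aIter G.act i j a k) (m11*p + m12*q) (m21*p + m22*q)) ∧
      m11*m22 - m12*m21 = (-1)^k := by
  intro k
  induction k with
  | zero =>
    refine ⟨1, 0, 0, 1, fun p q => ?_, by norm_num⟩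
    show cmb G i j a p q = cmb G i j a (1*p + 0*q) (0*p + 1*q)
    ring_nf
  | succ k ih =>
    obtain ⟨m11, m12, m21, m22, hmap, hdet⟩ := ih
    rcases Nat.mod_two_eq_zero_or_one k with hk | hk
    · -- letter i
      have hx : el i j k = i := el_even hk i j
      have hb1 : aIter G.act i j a (k+1) = G.act i (aIter G.act i j a k) := by
        rw [aIter_succ, hx]
      obtain ⟨c, hc⟩ := sigma_off G hij (aIter G.act i j a k)
      refine ⟨(c:ℝ)*m21 - m11, (c:ℝ)*m22 - m12, m21, m22, fun p q => ?_, ?_⟩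
      · have : WW G i j a (k+1) (cmb G i j a p q) =
            G.σ i (aIter G.act i j a k) (WW G i j a k (cmb G i j a p q)) := by
          rw [WW_succ, hx]; rfl
        rw [this, hmap p q, sigma_cmb G _ hc, hb1]
        congr 1
        ring
      · rw [pow_succ]
        nlinarith [hdet]
    · -- letter j
      have hx : el i j k = j := el_odd hk i j
      have hb1 : aIter G.act i j a (k+1) = G.act j (aIter G.act i j a k) := by
        rw [aIter_succ, hx]
      obtain ⟨c, hc⟩ := sigma_off G hij.symm (aIter G.act i j a k)
      refine ⟨m11, m12, (c:ℝ)*m11 - m21, (c:ℝ)*m12 - m22, fun p q => ?_, ?_⟩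
      · have h1 : WW G i j a (k+1) (cmb G i j a p q) =
            G.σ j (aIter G.act i j a k) (WW G i j a k (cmb G i j a p q)) := by
          rw [WW_succ, hx]; rfl
        rw [h1, hmap p q, cmb_comm, sigma_cmb G _ hc, hb1, cmb_comm]
        congr 1
        ring
      · rw [pow_succ]
        nlinarith [hdet]

lemma WW_crs (G : GRS N A) {i j : N} (hij : i ≠ j) (a : A) (k : ℕ) (p q p' q' : ℝ) :
    crs G i j (aIter G.act i j a k) (WW G i j a k (cmb G i j a p q))
      (WW G i j a k (cmb G i j a p' q')) = (-1)^k * (p*q' - q*p') := by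
  obtain ⟨m11, m12, m21, m22, hmap, hdet⟩ := WW_cmb G hij a k
  rw [hmap, hmap, crs_cmb G hij]
  linear_combination (p*q' - q*p') * hdet

lemma WW_root (G : GRS N A) (i j : N) (a : A) :
    ∀ k, WW G i j a k '' G.root a = G.root (aIter G.act i j a k) := by
  intro k
  induction k with
  | zero =>
    rw [show aIter G.act i j a 0 = a from rfl]
    simp [WW]
    exact Set.image_id _
  | succ k ih =>
    have h1 : WW G i j a (k+1) '' G.root a =
        G.σ (el i j k) (aIter G.act i j a k) '' (WW G i j a k '' G.root a) := by
      rw [WW_succ, ← Set.image_comp]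
      rfl
    rw [h1, ih, G.ax5_root, aIter_succ]

lemma WW_alpha_n (G : GRS N A) {i j n : N} (hij : i ≠ j) (hni : n ≠ i) (hnj : n ≠ j)
    (a : A) : ∀ k, ∃ p q : ℝ,
      WW G i j a k (G.α n a) =
        G.α n (aIter G.act i j a k) + cmb G i j (aIter G.act i j a k) p q := by
  intro k
  induction k with
  | zero =>
    refine ⟨0, 0, ?_⟩
    rw [show aIter G.act i j a 0 = a from rfl]
    simp [WW, cmb]
  | succ k ih =>
    obtain ⟨p, q, hpq⟩ := ih
    rcases Nat.mod_two_eq_zero_or_one k with hk | hk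
    · have hx : el i j k = i := el_even hk i j
      have hb1 : aIter G.act i j a (k+1) = G.act i (aIter G.act i j a k) := by
        rw [aIter_succ, hx]
      obtain ⟨c, hc⟩ := sigma_off G hij (aIter G.act i j a k)
      obtain ⟨cn, hcn⟩ := G.ax5_off i (aIter G.act i j a k) n hni
      have h1 : WW G i j a (k+1) (G.α n a) =
          G.σ i (aIter G.act i j a k) (WW G i j a k (G.α n a)) := by
        rw [WW_succ, hx]; rfl
      refine ⟨q*c - p + cn, q, ?_⟩
      rw [h1, hpq, map_add, hcn, sigma_cmb G _ hc, hb1, cmb, cmb]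
      module
    · have hx : el i j k = j := el_odd hk i j
      have hb1 : aIter G.act i j a (k+1) = G.act j (aIter G.act i j a k) := by
        rw [aIter_succ, hx]
      obtain ⟨c, hc⟩ := sigma_off G hij.symm (aIter G.act i j a k)
      obtain ⟨cn, hcn⟩ := G.ax5_off j (aIter G.act i j a k) n hnj
      have h1 : WW G i j a (k+1) (G.α n a) =
          G.σ j (aIter G.act i j a k) (WW G i j a k (G.α n a)) := by
        rw [WW_succ, hx]; rfl
      refine ⟨p, p*c - q + cn, ?_⟩
      rw [h1, hpq, map_add, hcn, cmb_comm, sigma_cmb G _ hc, hb1, cmb, cmb]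
      module

end Stmt8

namespace Stmt8
variable {N : Type*} {A : Type*}

section Target
variable {act : N → A → A} {i j : N}

lemma altIter_eq_iter (act : N → A → A) (i j : N) (a : A) :
    ∀ m, altIter act i j a m = (fun x => act i (act j x))^[m] a := by
  intro m
  induction m with
  | zero => rfl
  | succ m ih =>
    show act i (act j (altIter act i j a m)) = _
    rw [ih, Function.iterate_succ_apply']

variable (hi : ∀ x, act i (act i x) = x) (hj : ∀ x, act j (act j x) = x)

lemma gh_cancel (hi : ∀ x, act i (act i x) = x) (hj : ∀ x, act j (act j x) = x) (x : A) :
    (fun x => act i (act j x)) ((fun x => act j (act i x)) x) = x := by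
  show act i (act j (act j (act i x))) = x
  rw [hj, hi]

lemma g_inj (hi : ∀ x, act i (act i x) = x) (hj : ∀ x, act j (act j x) = x) :
    Function.Injective (fun x => act i (act j x)) := by
  apply Function.LeftInverse.injective (g := fun x => act j (act i x))
  intro x
  exact gh_cancel hj hi x

lemma gh_iter_cancel (hi : ∀ x, act i (act i x) = x) (hj : ∀ x, act j (act j x) = x) :
    ∀ (k : ℕ) (x : A),
      (fun x => act i (act j x))^[k] ((fun x => act j (act i x))^[k] x) = x := by
  intro k
  induction k with
  | zero => intro x; rfl
  | succ k ih =>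
    intro x
    rw [Function.iterate_succ_apply, Function.iterate_succ_apply']
    show (fun x => act i (act j x))^[k]
      (act i (act j (act j (act i ((fun x => act j (act i x))^[k] x))))) = x
    rw [hj, hi]
    exact ih x

lemma theta_period (hi : ∀ x, act i (act i x) = x) (hj : ∀ x, act j (act j x) = x)
    {a : A} (hθ : (ThetaSet act i j a).Finite) :
    ∃ Q : ℕ, 0 < Q ∧ Q = (ThetaSet act i j a).ncard ∧
      (fun x => act i (act j x))^[Q] a = a := by
  set g := fun x => act i (act j x) with hg
  set h := fun x => act j (act i x) with hh
  have hganj : Function.Injective g := g_inj hi hj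
  have hexists : ∃ d : ℕ, 0 < d ∧ g^[d] a = a := by
    have hsub : Set.range (fun m : ℕ => g^[m] a) ⊆ ThetaSet act i j a := by
      rintro - ⟨m, rfl⟩
      exact ⟨m, Or.inl (altIter_eq_iter act i j a m).symm⟩
    have hninj : ¬ Function.Injective (fun m : ℕ => g^[m] a) := by
      intro hinj
      exact (Set.infinite_range_of_injective hinj) (hθ.subset hsub)
    rw [Function.not_injective_iff] at hninj
    obtain ⟨m1, m2, heq, hne⟩ := hninj
    rcases Nat.lt_or_ge m1 m2 with hlt | hge
    · refine ⟨m2 - m1, by omega, ?_⟩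
      have h2 : g^[m1] (g^[m2 - m1] a) = g^[m1] a := by
        rw [← Function.iterate_add_apply]
        rw [show m1 + (m2 - m1) = m2 by omega]
        exact heq.symm
      exact Function.Injective.iterate hganj m1 h2
    · have hlt : m2 < m1 := by omega
      refine ⟨m1 - m2, by omega, ?_⟩
      have h2 : g^[m2] (g^[m1 - m2] a) = g^[m2] a := by
        rw [← Function.iterate_add_apply]
        rw [show m2 + (m1 - m2) = m1 by omega]
        exact heq
      exact Function.Injective.iterate hganj m2 h2
  classical
  set Q := Nat.find hexists with hQdef
  obtain ⟨hQpos, hQfix⟩ : 0 < Q ∧ g^[Q] a = a := Nat.find_spec hexists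
  have hmod : ∀ m : ℕ, g^[m] a = g^[m % Q] a := by
    intro m
    conv_lhs => rw [show m = m % Q + Q * (m / Q) by have := Nat.div_add_mod m Q; omega]
    rw [Function.iterate_add_apply, Function.iterate_mul]
    congr 1
    exact Function.iterate_fixed hQfix _
  have hhiter : ∀ m : ℕ, ∃ r < Q, h^[m] a = g^[r] a := by
    intro m
    rcases Nat.eq_zero_or_pos (m % Q) with h0 | hpos
    · refine ⟨0, hQpos, ?_⟩
      apply Function.Injective.iterate hganj m
      rw [gh_iter_cancel hi hj m a]
      show a = g^[m] (g^[0] a)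
      rw [Function.iterate_zero_apply, hmod m, h0, Function.iterate_zero_apply]
    · refine ⟨Q - m % Q, by omega, ?_⟩
      apply Function.Injective.iterate hganj m
      rw [gh_iter_cancel hi hj m a, ← Function.iterate_add_apply]
      have hmq : m % Q < Q := Nat.mod_lt _ hQpos
      have heq2 : m + (Q - m % Q) = Q * (m / Q + 1) := by
        have h0 := Nat.div_add_mod m Q
        have h3 : Q * (m / Q + 1) = Q * (m / Q) + Q := by ring
        omega
      rw [heq2, Function.iterate_mul]
      exact (Function.iterate_fixed hQfix _).symm
  have hΘeq : ThetaSet act i j a = (fun r => g^[r] a) '' Set.Iio Q := by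
    apply Set.Subset.antisymm
    · rintro x ⟨m, hx | hx⟩
      · rw [altIter_eq_iter] at hx
        exact ⟨m % Q, Nat.mod_lt _ hQpos, (hx.trans (hmod m)).symm⟩
      · rw [altIter_eq_iter] at hx
        obtain ⟨r, hr, hre⟩ := hhiter m
        exact ⟨r, hr, (hx.trans hre).symm⟩
    · rintro - ⟨r, hr, rfl⟩
      exact ⟨r, Or.inl (altIter_eq_iter act i j a r).symm⟩
  have hinjOn : Set.InjOn (fun r => g^[r] a) (Set.Iio Q) := by
    intro r hr r' hr' hre
    by_contra hne
    rcases Nat.lt_or_ge r r' with hlt | hge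
    · have h2 : g^[r] (g^[r' - r] a) = g^[r] a := by
        rw [← Function.iterate_add_apply, show r + (r' - r) = r' by omega]
        exact hre.symm
      have h3 := Function.Injective.iterate hganj r h2
      have hr2 : r' < Q := hr'
      have hlt2 : r' - r < Nat.find hexists := by rw [← hQdef]; omega
      exact Nat.find_min hexists hlt2 ⟨by omega, h3⟩
    · have hlt : r' < r := by omega
      have h2 : g^[r'] (g^[r - r'] a) = g^[r'] a := by
        rw [← Function.iterate_add_apply, show r' + (r - r') = r by omega]
        exact hre
      have h3 := Function.Injective.iterate hganj r' h2
      have hr2 : r < Q := hr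
      have hlt2 : r - r' < Nat.find hexists := by rw [← hQdef]; omega
      exact Nat.find_min hexists hlt2 ⟨by omega, h3⟩
  refine ⟨Q, hQpos, ?_, hQfix⟩
  rw [hΘeq, ← Finset.coe_range, ← Finset.coe_image, Set.ncard_coe_finset,
    Finset.card_image_of_injOn (by rwa [Finset.coe_range]), Finset.card_range]

lemma aIter_even_odd (act : N → A → A) (i j : N) (a : A) :
    ∀ k, aIter act i j a (2*k) = (fun x => act j (act i x))^[k] a ∧
      aIter act i j a (2*k+1) = act i ((fun x => act j (act i x))^[k] a) := by
  intro k
  induction k with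
  | zero => exact ⟨rfl, by rw [show 2*0+1 = 0+1 from rfl, aIter_succ, el_even (by omega)]; rfl⟩
  | succ k ih =>
    constructor
    · rw [show 2*(k+1) = (2*k+1)+1 by omega, aIter_succ, el_odd (by omega), ih.2,
        Function.iterate_succ_apply']
    · rw [show 2*(k+1)+1 = (2*(k+1))+1 by omega, aIter_succ, el_even (by omega)]
      congr 1
      rw [show 2*(k+1) = (2*k+1)+1 by omega, aIter_succ, el_odd (by omega), ih.2,
        Function.iterate_succ_apply']

lemma target_equal (G : GRS N A) {i j : N} (hij : i ≠ j) (a : A)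
    (hfinθ : (ThetaSet G.act i j a).Finite)
    {M : ℕ} (hdvd : (ThetaSet G.act i j a).ncard ∣ M) :
    aIter G.act i j a M = aIter G.act j i a M := by
  have hi : ∀ x, G.act i (G.act i x) = x := fun x => G.act_invol i x
  have hj : ∀ x, G.act j (G.act j x) = x := fun x => G.act_invol j x
  obtain ⟨Q, hQpos, hQcard, hQfix⟩ := theta_period hi hj hfinθ
  set g := fun x => G.act i (G.act j x) with hg
  set h := fun x => G.act j (G.act i x) with hh
  have hgM : g^[M] a = a := by
    obtain ⟨s, rfl⟩ : ∃ s, M = Q * s := by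
      obtain ⟨s, hs⟩ := hdvd
      exact ⟨s, by rw [hs, hQcard]⟩
    rw [Function.iterate_mul]
    exact Function.iterate_fixed hQfix s
  have hganj : Function.Injective g := g_inj hi hj
  rcases Nat.even_or_odd M with ⟨k, hk⟩ | ⟨k, hk⟩
  · -- M = k + k
    have hM2 : M = 2*k := by omega
    rw [hM2, (aIter_even_odd G.act i j a k).1, (aIter_even_odd G.act j i a k).1]
    -- h^[k] a = g^[k] a
    apply Function.Injective.iterate hganj k
    rw [gh_iter_cancel hi hj k a, ← Function.iterate_add_apply]
    rw [show k + k = M by omega, hgM]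
  · have hM2 : M = 2*k+1 := by omega
    rw [hM2, (aIter_even_odd G.act i j a k).2, (aIter_even_odd G.act j i a k).2]
    -- act i (h^[k] a) = act j (g^[k] a)
    have h1 : h^[k] a = g^[k+1] a := by
      apply Function.Injective.iterate hganj k
      rw [gh_iter_cancel hi hj k a, ← Function.iterate_add_apply]
      rw [show k + (k+1) = M by omega, hgM]
    rw [h1, Function.iterate_succ_apply']
    show G.act i (g (g^[k] a)) = G.act j (g^[k] a)
    rw [hg]
    show G.act i (G.act i (G.act j (g^[k] a))) = _
    rw [hi]

end Target
end Stmt8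

namespace Stmt8
variable {N : Type*} {A : Type*}

lemma neg_one_pow_ne (M : ℕ) : ((-1 : ℝ))^M ≠ 0 := pow_ne_zero _ (by norm_num)

lemma main_equal (G : GRS N A) {i j : N} (hij : i ≠ j) (a : A)
    (hfinA : (cone G i j a).Finite) :
    aIter G.act i j a ((cone G i j a).ncard) = aIter G.act j i a ((cone G i j a).ncard) ∧
    WW G i j a ((cone G i j a).ncard) = WW G j i a ((cone G i j a).ncard) := by
  have hconeJ : cone G j i a = cone G i j a := (cone_comm G i j a).symm
  have hfinJ : (cone G j i a).Finite := by rw [hconeJ]; exact hfinA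
  have hMJ : (cone G j i a).ncard = (cone G i j a).ncard := by rw [hconeJ]
  have hθ := G.ax7 a i j hij hfinA
  have hT : aIter G.act i j a ((cone G i j a).ncard) =
      aIter G.act j i a ((cone G i j a).ncard) :=
    target_equal G hij a hθ.1 hθ.2
  refine ⟨hT, ?_⟩
  have img1 : WW G i j a ((cone G i j a).ncard) '' cone G i j a =
      -(cone G i j (aIter G.act i j a ((cone G i j a).ncard))) :=
    cor_img G a hij hfinA
  have img2 : WW G j i a ((cone G i j a).ncard) '' cone G i j a =
      -(cone G i j (aIter G.act i j a ((cone G i j a).ncard))) := by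
    have h := cor_img G a hij.symm hfinJ
    rw [hMJ, hconeJ, ← hT, cone_comm G j i] at h
    exact h
  have crs1 : ∀ p q p' q' : ℝ,
      crs G i j (aIter G.act i j a ((cone G i j a).ncard))
        (WW G i j a ((cone G i j a).ncard) (cmb G i j a p q))
        (WW G i j a ((cone G i j a).ncard) (cmb G i j a p' q')) =
      (-1)^((cone G i j a).ncard) * (p*q' - q*p') :=
    fun p q p' q' => WW_crs G hij a _ p q p' q'
  have crs2 : ∀ p q p' q' : ℝ,
      crs G i j (aIter G.act i j a ((cone G i j a).ncard))
        (WW G j i a ((cone G i j a).ncard) (cmb G i j a p q))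
        (WW G j i a ((cone G i j a).ncard) (cmb G i j a p' q')) =
      (-1)^((cone G i j a).ncard) * (p*q' - q*p') := by
    intro p q p' q'
    have h := WW_crs G hij.symm a ((cone G i j a).ncard) q p q' p'
    rw [← hT, cmb_comm G j i a q p, cmb_comm G j i a q' p', crs_swap G j i] at h
    linear_combination (-1 : ℝ) * h
  -- agreement on α i a
  have hWαi : WW G i j a ((cone G i j a).ncard) (G.α i a) =
      WW G j i a ((cone G i j a).ncard) (G.α i a) := by
    have hu : WW G i j a ((cone G i j a).ncard) (G.α i a) ∈
        -(cone G i j (aIter G.act i j a ((cone G i j a).ncard))) := by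
      rw [← img1]; exact ⟨_, α_mem_cone_i G i j a, rfl⟩
    rw [← img2] at hu
    obtain ⟨z, hz, hzW⟩ := hu
    obtain ⟨zp, zq, hzp, hzq, hze⟩ := cone_cmb G hz
    have hv : WW G j i a ((cone G i j a).ncard) (G.α i a) ∈
        -(cone G i j (aIter G.act i j a ((cone G i j a).ncard))) := by
      rw [← img2]; exact ⟨_, α_mem_cone_i G i j a, rfl⟩
    rw [← img1] at hv
    obtain ⟨β, hβ, hβW⟩ := hv
    obtain ⟨bp, bq, hbp, hbq, hbe⟩ := cone_cmb G hβ
    have hkey : crs G i j (aIter G.act i j a ((cone G i j a).ncard))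
        (WW G i j a ((cone G i j a).ncard) (G.α i a))
        (WW G i j a ((cone G i j a).ncard) β) =
      crs G i j (aIter G.act i j a ((cone G i j a).ncard))
        (WW G j i a ((cone G i j a).ncard) z)
        (WW G j i a ((cone G i j a).ncard) (G.α i a)) := by
      rw [hβW, hzW]
    rw [show G.α i a = cmb G i j a 1 0 from (cmb_alpha_i G i j a).symm, hbe, hze] at hkey
    rw [crs1, crs2] at hkey
    have hq0 : zq = 0 := by
      have h2 : bq = -zq := by
        have h3 := mul_left_cancel₀ (neg_one_pow_ne ((cone G i j a).ncard))
          (by linear_combination hkey :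
            ((-1:ℝ))^((cone G i j a).ncard) * (1*bq - 0*bp) =
            ((-1:ℝ))^((cone G i j a).ncard) * (zp*0 - zq*1))
        linarith
      linarith
    have hzeq : z = G.α i a := by
      apply cone_j0 G hij hz
      rw [hze, rp_cmb_j G hij, hq0]
    rw [← hzW, hzeq]
  -- agreement on α j a
  have hWαj : WW G i j a ((cone G i j a).ncard) (G.α j a) =
      WW G j i a ((cone G i j a).ncard) (G.α j a) := by
    have hu : WW G i j a ((cone G i j a).ncard) (G.α j a) ∈
        -(cone G i j (aIter G.act i j a ((cone G i j a).ncard))) := by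
      rw [← img1]; exact ⟨_, α_mem_cone_j G i j a, rfl⟩
    rw [← img2] at hu
    obtain ⟨z, hz, hzW⟩ := hu
    obtain ⟨zp, zq, hzp, hzq, hze⟩ := cone_cmb G hz
    have hv : WW G j i a ((cone G i j a).ncard) (G.α j a) ∈
        -(cone G i j (aIter G.act i j a ((cone G i j a).ncard))) := by
      rw [← img2]; exact ⟨_, α_mem_cone_j G i j a, rfl⟩
    rw [← img1] at hv
    obtain ⟨β, hβ, hβW⟩ := hv
    obtain ⟨bp, bq, hbp, hbq, hbe⟩ := cone_cmb G hβ
    have hkey : crs G i j (aIter G.act i j a ((cone G i j a).ncard))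
        (WW G i j a ((cone G i j a).ncard) (G.α j a))
        (WW G i j a ((cone G i j a).ncard) β) =
      crs G i j (aIter G.act i j a ((cone G i j a).ncard))
        (WW G j i a ((cone G i j a).ncard) z)
        (WW G j i a ((cone G i j a).ncard) (G.α j a)) := by
      rw [hβW, hzW]
    rw [show G.α j a = cmb G i j a 0 1 from (cmb_alpha_j G i j a).symm, hbe, hze] at hkey
    rw [crs1, crs2] at hkey
    have hp0 : zp = 0 := by
      have h3 := mul_left_cancel₀ (neg_one_pow_ne ((cone G i j a).ncard))
        (by linear_combination hkey :
          ((-1:ℝ))^((cone G i j a).ncard) * (0*bq - 1*bp) =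
          ((-1:ℝ))^((cone G i j a).ncard) * (zp*1 - zq*0))
      linarith
    have hzeq : z = G.α j a := by
      apply cone_i0 G hij hz
      rw [hze, rp_cmb_i G hij, hp0]
    rw [← hzW, hzeq]
  have hWcmb : ∀ p q : ℝ, WW G i j a ((cone G i j a).ncard) (cmb G i j a p q) =
      WW G j i a ((cone G i j a).ncard) (cmb G i j a p q) := by
    intro p q
    rw [cmb, map_add, map_add, map_smul, map_smul, map_smul, map_smul, hWαi, hWαj]
  -- the other basis vectors
  have hWn : ∀ n, n ≠ i → n ≠ j →
      WW G i j a ((cone G i j a).ncard) (G.α n a) =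
      WW G j i a ((cone G i j a).ncard) (G.α n a) := by
    intro n hni hnj
    obtain ⟨xA, yA, hA⟩ := WW_alpha_n G hij hni hnj a ((cone G i j a).ncard)
    obtain ⟨yB, xB, hB⟩ := WW_alpha_n G hij.symm hnj hni a ((cone G j i a).ncard)
    rw [hMJ, ← hT, cmb_comm G j i] at hB
    -- roots & positivity
    have hr1 : WW G i j a ((cone G i j a).ncard) (G.α n a) ∈
        G.root (aIter G.act i j a ((cone G i j a).ncard)) := by
      rw [← WW_root G i j a]; exact ⟨_, G.α_mem n a, rfl⟩
    have hr2 : WW G j i a ((cone G i j a).ncard) (G.α n a) ∈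
        G.root (aIter G.act i j a ((cone G i j a).ncard)) := by
      rw [hT, ← WW_root G j i a]; exact ⟨_, G.α_mem n a, rfl⟩
    have hn1 : rp G (aIter G.act i j a ((cone G i j a).ncard))
        (WW G i j a ((cone G i j a).ncard) (G.α n a)) n = 1 := by
      rw [hA, rp_add, rp_α_self, rp_cmb_other G (Ne.symm hni) (Ne.symm hnj)]; ring
    have hn2 : rp G (aIter G.act i j a ((cone G i j a).ncard))
        (WW G j i a ((cone G i j a).ncard) (G.α n a)) n = 1 := by
      rw [hB, rp_add, rp_α_self, rp_cmb_other G (Ne.symm hni) (Ne.symm hnj)]; ring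
    have hxA : 0 ≤ xA := by
      have h := root_nonneg G hr1 (n0 := n) (by rw [hn1]; norm_num) i
      rwa [hA, rp_add, rp_α_ne G _ hni, rp_cmb_i G hij, zero_add] at h
    have hyA : 0 ≤ yA := by
      have h := root_nonneg G hr1 (n0 := n) (by rw [hn1]; norm_num) j
      rwa [hA, rp_add, rp_α_ne G _ hnj, rp_cmb_j G hij, zero_add] at h
    have hxB : 0 ≤ xB := by
      have h := root_nonneg G hr2 (n0 := n) (by rw [hn2]; norm_num) i
      rwa [hB, rp_add, rp_α_ne G _ hni, rp_cmb_i G hij, zero_add] at h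
    have hyB : 0 ≤ yB := by
      have h := root_nonneg G hr2 (n0 := n) (by rw [hn2]; norm_num) j
      rwa [hB, rp_add, rp_α_ne G _ hnj, rp_cmb_j G hij, zero_add] at h
    -- preimages of -α i and -α j
    have hbi : ∃ bi ∈ cone G i j a, WW G j i a ((cone G i j a).ncard) bi =
        -(G.α i (aIter G.act i j a ((cone G i j a).ncard))) := by
      have hm : -(G.α i (aIter G.act i j a ((cone G i j a).ncard))) ∈
          -(cone G i j (aIter G.act i j a ((cone G i j a).ncard))) := by
        rw [Set.mem_neg, neg_neg]; exact α_mem_cone_i G i j _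
      rw [← img2] at hm
      obtain ⟨bi, h1, h2⟩ := hm
      exact ⟨bi, h1, h2⟩
    obtain ⟨bi, hbic, hbiW⟩ := hbi
    have hbj : ∃ bj ∈ cone G i j a, WW G j i a ((cone G i j a).ncard) bj =
        -(G.α j (aIter G.act i j a ((cone G i j a).ncard))) := by
      have hm : -(G.α j (aIter G.act i j a ((cone G i j a).ncard))) ∈
          -(cone G i j (aIter G.act i j a ((cone G i j a).ncard))) := by
        rw [Set.mem_neg, neg_neg]; exact α_mem_cone_j G i j _
      rw [← img2] at hm
      obtain ⟨bj, h1, h2⟩ := hm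
      exact ⟨bj, h1, h2⟩
    obtain ⟨bj, hbjc, hbjW⟩ := hbj
    obtain ⟨bip, biq, hbip, hbiq, hbie⟩ := cone_cmb G hbic
    obtain ⟨bjp, bjq, hbjp, hbjq, hbje⟩ := cone_cmb G hbjc
    have hbiW1 : WW G i j a ((cone G i j a).ncard) bi =
        -(G.α i (aIter G.act i j a ((cone G i j a).ncard))) := by
      rw [hbie, hWcmb, ← hbie, hbiW]
    have hbjW1 : WW G i j a ((cone G i j a).ncard) bj =
        -(G.α j (aIter G.act i j a ((cone G i j a).ncard))) := by
      rw [hbje, hWcmb, ← hbje, hbjW]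
    -- E and E'
    have hWE : WW G j i a ((cone G i j a).ncard)
        (G.α n a - (xA - xB) • bi - (yA - yB) • bj) =
        WW G i j a ((cone G i j a).ncard) (G.α n a) := by
      rw [map_sub, map_sub, map_smul, map_smul, hbiW, hbjW, hA, hB, cmb, cmb]
      module
    have hWE' : WW G i j a ((cone G i j a).ncard)
        (G.α n a + (xA - xB) • bi + (yA - yB) • bj) =
        WW G j i a ((cone G i j a).ncard) (G.α n a) := by
      rw [map_add, map_add, map_smul, map_smul, hbiW1, hbjW1, hA, hB, cmb, cmb]
      module
    have hEroot : G.α n a - (xA - xB) • bi - (yA - yB) • bj ∈ G.root a := by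
      have h2 : WW G j i a ((cone G i j a).ncard)
          (G.α n a - (xA - xB) • bi - (yA - yB) • bj) ∈
          G.root (aIter G.act i j a ((cone G i j a).ncard)) := by
        rw [hWE]; exact hr1
      rw [hT, ← WW_root G j i a] at h2
      obtain ⟨r, hr, hre⟩ := h2
      have heq := (WW G j i a ((cone G i j a).ncard)).injective hre
      rwa [← heq]
    have hE'root : G.α n a + (xA - xB) • bi + (yA - yB) • bj ∈ G.root a := by
      have h2 : WW G i j a ((cone G i j a).ncard)
          (G.α n a + (xA - xB) • bi + (yA - yB) • bj) ∈
          G.root (aIter G.act i j a ((cone G i j a).ncard)) := by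
        rw [hWE']; exact hr2
      rw [← WW_root G i j a] at h2
      obtain ⟨r, hr, hre⟩ := h2
      have heq := (WW G i j a ((cone G i j a).ncard)).injective hre
      rwa [← heq]
    have hEn : rp G a (G.α n a - (xA - xB) • bi - (yA - yB) • bj) n = 1 := by
      rw [rp_sub, rp_sub, rp_smul, rp_smul, rp_α_self, hbie, hbje,
        rp_cmb_other G (Ne.symm hni) (Ne.symm hnj), rp_cmb_other G (Ne.symm hni) (Ne.symm hnj)]
      ring
    have hE'n : rp G a (G.α n a + (xA - xB) • bi + (yA - yB) • bj) n = 1 := by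
      rw [rp_add, rp_add, rp_smul, rp_smul, rp_α_self, hbie, hbje,
        rp_cmb_other G (Ne.symm hni) (Ne.symm hnj), rp_cmb_other G (Ne.symm hni) (Ne.symm hnj)]
      ring
    have hEi : 0 ≤ -((xA - xB)*bip + (yA - yB)*bjp) := by
      have h := root_nonneg G hEroot (n0 := n) (by rw [hEn]; norm_num) i
      rw [rp_sub, rp_sub, rp_smul, rp_smul, rp_α_ne G _ hni, hbie, hbje,
        rp_cmb_i G hij, rp_cmb_i G hij] at h
      linarith
    have hEj : 0 ≤ -((xA - xB)*biq + (yA - yB)*bjq) := by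
      have h := root_nonneg G hEroot (n0 := n) (by rw [hEn]; norm_num) j
      rw [rp_sub, rp_sub, rp_smul, rp_smul, rp_α_ne G _ hnj, hbie, hbje,
        rp_cmb_j G hij, rp_cmb_j G hij] at h
      linarith
    have hE'i : 0 ≤ (xA - xB)*bip + (yA - yB)*bjp := by
      have h := root_nonneg G hE'root (n0 := n) (by rw [hE'n]; norm_num) i
      rw [rp_add, rp_add, rp_smul, rp_smul, rp_α_ne G _ hni, hbie, hbje,
        rp_cmb_i G hij, rp_cmb_i G hij] at h
      linarith
    have hE'j : 0 ≤ (xA - xB)*biq + (yA - yB)*bjq := by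
      have h := root_nonneg G hE'root (n0 := n) (by rw [hE'n]; norm_num) j
      rw [rp_add, rp_add, rp_smul, rp_smul, rp_α_ne G _ hnj, hbie, hbje,
        rp_cmb_j G hij, rp_cmb_j G hij] at h
      linarith
    have h1 : (xA - xB)*bip + (yA - yB)*bjp = 0 := by linarith
    have h2 : (xA - xB)*biq + (yA - yB)*bjq = 0 := by linarith
    have hv : (xA - xB) • bi + (yA - yB) • bj = (0 : N →₀ ℝ) := by
      rw [hbie, hbje]
      have h3 : (xA - xB) • cmb G i j a bip biq + (yA - yB) • cmb G i j a bjp bjq =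
          cmb G i j a ((xA - xB)*bip + (yA - yB)*bjp) ((xA - xB)*biq + (yA - yB)*bjq) := by
        rw [cmb, cmb, cmb]; module
      rw [h3, h1, h2]
      rw [cmb]; module
    have hEA : G.α n a - (xA - xB) • bi - (yA - yB) • bj = G.α n a := by
      rw [sub_sub, hv, sub_zero]
    rw [← hWE, hEA]
  -- extensionality
  apply LinearEquiv.toLinearMap_injective
  apply Module.Basis.ext (bas G a)
  intro n
  have hb : bas G a n = G.α n a := (α_eq_bas G a n).symm
  rw [hb]
  show WW G i j a ((cone G i j a).ncard) (G.α n a) =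
    WW G j i a ((cone G i j a).ncard) (G.α n a)
  by_cases hni : n = i
  · subst hni; exact hWαi
  by_cases hnj : n = j
  · subst hnj; exact hWαj
  exact hWn n hni hnj

end Stmt8


/-- if `m_{i,j;a}` is finite then the two alternating words of length
`m_{i,j;a}` at `a` (rightmost letter `i`, resp. `j`) have the same target and the same
σ-composite (the Coxeter relations hold). -/
theorem stmt8 [Nonempty N] [Nonempty A] (G : GRS N A) (a : A) (i j : N) (hij : i ≠ j)
    (hfin : (G.root a ∩
      {β | ∃ p q : ℕ, β = (p : ℝ) • G.α i a + (q : ℝ) • G.α j a}).Finite) :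
    G.target (altR i j (G.mij i j a)) a = G.target (altR j i (G.mij i j a)) a ∧
    G.wmap (altR i j (G.mij i j a)) a = G.wmap (altR j i (G.mij i j a)) a := by
  have hfinA : (Stmt8.cone G i j a).Finite := hfin
  have hM : G.mij i j a = (Stmt8.cone G i j a).ncard := rfl
  obtain ⟨h1, h2⟩ := Stmt8.main_equal G hij a hfinA
  constructor
  · rw [Stmt8.target_altR, Stmt8.target_altR, hM]
    exact h1
  · rw [Stmt8.wmap_altR, Stmt8.wmap_altR, hM]
    exact h2
end

section
/- Let m ∈ ℕ, (i_1, …, i_m) ∈ N^m and a ∈ A. If the word (i_1, …, i_m) at a is not reduced (i.e. its length ℓ is strictly less than m), then there exist j_2, …, j_{m−1} ∈ N such that the word (i_2, …, i_m) at a and the word (i_1, j_2, …, j_{m−1}) at a have the same target and the same σ-composite. -/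
open Pointwise

variable {N : Type*} {A : Type*}

section Aux

variable (G : GRS N A)

/-- The basis of simple roots at `a`. -/
noncomputable def GRSBas (a : A) : Module.Basis N ℝ (N →₀ ℝ) :=
  Module.Basis.mk (G.α_indep a) (G.α_span a).ge

lemma GRSBas_apply (a : A) (n : N) : GRSBas G a n = G.α n a := by
  unfold GRSBas; exact Module.Basis.mk_apply _ _ n

lemma GRSBas_repr_α (a : A) (n : N) :
    (GRSBas G a).repr (G.α n a) = Finsupp.single n 1 := by
  rw [← GRSBas_apply G a n, Module.Basis.repr_self]

lemma coord_nat {a : A} {v : N →₀ ℝ} (hv : v ∈ NSpan (Set.range fun n => G.α n a)) (j : N) :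
    ∃ k : ℕ, (GRSBas G a).repr v j = (k : ℝ) := by
  have hv' : v ∈ AddSubmonoid.closure (Set.range fun n => G.α n a) := hv
  clear hv
  induction hv' using AddSubmonoid.closure_induction with
  | mem x hx =>
    obtain ⟨n, rfl⟩ := hx
    rw [GRSBas_repr_α]
    rcases eq_or_ne n j with rfl | hnj
    · exact ⟨1, by simp⟩
    · exact ⟨0, by simp [Finsupp.single_apply, hnj]⟩
  | zero => exact ⟨0, by simp⟩
  | add x y hx hy ihx ihy =>
    obtain ⟨k1, hk1⟩ := ihx
    obtain ⟨k2, hk2⟩ := ihy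
    exact ⟨k1 + k2, by rw [map_add]; simp [hk1, hk2]⟩

lemma coord_σ (i : N) (a : A) {j : N} (hj : j ≠ i) (v : N →₀ ℝ) :
    (GRSBas G (G.act i a)).repr (G.σ i a v) j = (GRSBas G a).repr v j := by
  have key : (Finsupp.lapply j ∘ₗ ((GRSBas G (G.act i a)).repr.toLinearMap ∘ₗ
      (G.σ i a).toLinearMap)) = Finsupp.lapply j ∘ₗ (GRSBas G a).repr.toLinearMap := by
    apply Module.Basis.ext (GRSBas G a)
    intro n
    rw [GRSBas_apply]
    simp only [LinearMap.comp_apply, LinearEquiv.coe_coe, Finsupp.lapply_apply]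
    rcases eq_or_ne n i with rfl | hni
    · rw [G.ax5_diag, map_neg, GRSBas_repr_α, GRSBas_repr_α]
      simp [Finsupp.single_apply, Ne.symm hj]
    · obtain ⟨m, hm⟩ := G.ax5_off i a n hni
      rw [hm, map_add, map_smul, GRSBas_repr_α, GRSBas_repr_α, GRSBas_repr_α]
      simp [Finsupp.single_apply, Ne.symm hj]
  have := LinearMap.congr_fun key v
  simpa using this

lemma α_pos (n : N) (a : A) : G.α n a ∈ G.pos a :=
  ⟨G.α_mem n a, AddSubmonoid.subset_closure ⟨n, rfl⟩⟩

lemma pos_neg_empty [Nonempty N] {a : A} {β : N →₀ ℝ}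
    (h1 : β ∈ G.pos a) (h2 : -β ∈ G.pos a) : False := by
  have hz : β = 0 := by
    have h0 : (GRSBas G a).repr β = 0 := by
      ext j
      obtain ⟨k, hk⟩ := coord_nat G h1.2 j
      obtain ⟨k', hk'⟩ := coord_nat G h2.2 j
      rw [map_neg] at hk'
      simp only [Finsupp.coe_neg, Pi.neg_apply] at hk'
      have hsum : (k : ℝ) + (k' : ℝ) = 0 := by rw [← hk]; linarith
      have hsum' : k + k' = 0 := by exact_mod_cast hsum
      have hk0 : k = 0 := by omega
      simp [hk, hk0]
    have := (GRSBas G a).repr.injective (by rw [h0, map_zero] : (GRSBas G a).repr β = (GRSBas G a).repr 0)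
    exact this
  subst hz
  obtain ⟨i⟩ := (inferInstance : Nonempty N)
  have hmem : (0 : N →₀ ℝ) ∈ (Set.range fun r : ℝ => r • G.α i a) ∩ G.root a :=
    ⟨⟨0, by simp⟩, h1.1⟩
  rw [G.ax4] at hmem
  have hne : G.α i a ≠ 0 := (G.α_indep a).ne_zero i
  rcases hmem with h | h
  · exact hne h.symm
  · simp only [Set.mem_singleton_iff] at h
    exact hne (by rw [← neg_eq_zero, ← h])

lemma exists_coord (i : N) {a : A} {β : N →₀ ℝ} (hβ : β ∈ G.pos a) (hne : β ≠ G.α i a) :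
    ∃ j, j ≠ i ∧ ∃ k : ℕ, k ≠ 0 ∧ (GRSBas G a).repr β j = (k : ℝ) := by
  by_contra hc
  push_neg at hc
  have hz : ∀ j, j ≠ i → (GRSBas G a).repr β j = 0 := by
    intro j hj
    obtain ⟨k, hk⟩ := coord_nat G hβ.2 j
    rcases Nat.eq_zero_or_pos k with hk0 | hk0
    · rw [hk, hk0]; simp
    · exact absurd hk (hc j hj k (by omega))
  have hβeq : β = ((GRSBas G a).repr β i) • G.α i a := by
    apply (GRSBas G a).repr.injective
    rw [map_smul, GRSBas_repr_α]
    ext j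
    rcases eq_or_ne j i with rfl | hj
    · simp [Finsupp.single_apply]
    · rw [hz j hj]; simp [Finsupp.single_apply, Ne.symm hj]
  have hmem : β ∈ (Set.range fun r : ℝ => r • G.α i a) ∩ G.root a :=
    ⟨⟨_, hβeq.symm⟩, hβ.1⟩
  rw [G.ax4] at hmem
  rcases hmem with h | h
  · exact hne h
  · simp only [Set.mem_singleton_iff] at h
    obtain ⟨k, hk⟩ := coord_nat G hβ.2 i
    have hri : (GRSBas G a).repr β i = -1 := by
      rw [h, map_neg, GRSBas_repr_α]; simp
    rw [hri] at hk
    have : (0:ℝ) ≤ (k:ℝ) := k.cast_nonneg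
    linarith

lemma σ_pos [Nonempty N] (i : N) {a : A} {β : N →₀ ℝ}
    (hβ : β ∈ G.pos a) (hne : β ≠ G.α i a) : G.σ i a β ∈ G.pos (G.act i a) := by
  have hroot : G.σ i a β ∈ G.root (G.act i a) := by
    rw [← G.ax5_root]; exact Set.mem_image_of_mem _ hβ.1
  rw [G.ax3 (G.act i a)] at hroot
  rcases hroot with h | h
  · exact h
  · exfalso
    rw [Set.mem_neg] at h
    obtain ⟨j, hj, k, hk0, hkj⟩ := exists_coord G i hβ hne
    have hc := coord_σ G i a hj β
    obtain ⟨k', hk'⟩ := coord_nat G h.2 j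
    rw [map_neg] at hk'
    simp only [Finsupp.coe_neg, Pi.neg_apply] at hk'
    rw [hc, hkj] at hk'
    have hsum : (k : ℝ) + (k' : ℝ) = 0 := by linarith
    have hsum' : k + k' = 0 := by exact_mod_cast hsum
    omega

lemma root_image (l : List N) (a : A) :
    ⇑(G.wmap l a) '' G.root a = G.root (G.target l a) := by
  induction l with
  | nil =>
    show ⇑(LinearEquiv.refl ℝ _) '' G.root a = G.root (G.target [] a)
    exact Set.image_id _
  | cons i l ih =>
    rw [show ⇑(G.wmap (i :: l) a) = ⇑(G.σ i (G.target l a)) ∘ ⇑(G.wmap l a) from rfl,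
      Set.image_comp, ih, G.ax5_root]
    rfl

lemma root_mem_wmap (l : List N) (a : A) {β : N →₀ ℝ} (hβ : β ∈ G.root a) :
    G.wmap l a β ∈ G.root (G.target l a) := by
  rw [← root_image]; exact Set.mem_image_of_mem _ hβ

lemma root_mem_symm (l : List N) (a : A) {γ : N →₀ ℝ} (hγ : γ ∈ G.root (G.target l a)) :
    (G.wmap l a).symm γ ∈ G.root a := by
  rw [← root_image] at hγ
  obtain ⟨β, hβ, rfl⟩ := hγ
  simpa using hβ

/-- The inversion set of a word. -/
def InvSet (l : List N) (a : A) : Set (N →₀ ℝ) :=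
  {β | β ∈ G.pos a ∧ G.wmap l a β ∈ -(G.pos (G.target l a))}

lemma pos_or_neg {a : A} {β : N →₀ ℝ} (hβ : β ∈ G.root a) :
    β ∈ G.pos a ∨ -β ∈ G.pos a := by
  rw [G.ax3 a] at hβ
  rcases hβ with h | h
  · exact Or.inl h
  · exact Or.inr (Set.mem_neg.mp h)

lemma inv_parity [Nonempty N] (l : List N) (a : A) :
    (InvSet G l a).Finite ∧ (InvSet G l a).ncard % 2 = l.length % 2 := by
  induction l with
  | nil =>
    have he : InvSet G [] a = ∅ := by
      ext β
      simp only [InvSet, Set.mem_setOf_eq, Set.mem_empty_iff_false, iff_false, not_and]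
      intro hp hn
      rw [Set.mem_neg] at hn
      exact pos_neg_empty G hp hn
    rw [he]; simp
  | cons i l ih =>
    obtain ⟨ihf, ihp⟩ := ih
    set c := G.target l a with hc
    set T := G.wmap l a with hT
    have hw : ∀ β, G.wmap (i :: l) a β = G.σ i c (T β) := fun β => rfl
    have ht : G.target (i :: l) a = G.act i c := rfl
    set α' := G.α i c with hα'
    set δ := T.symm α' with hδ
    have hδroot : δ ∈ G.root a := root_mem_symm G l a (G.α_mem i c)
    have hTδ : T δ = α' := T.apply_symm_apply α'
    have hiff : ∀ β, β ∈ G.pos a →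
        (G.σ i c (T β) ∈ -(G.pos (G.act i c)) ↔
          ((T β ∈ -(G.pos c) ∧ T β ≠ -α') ∨ T β = α')) := by
      intro β hβ
      have hγr : T β ∈ G.root c := root_mem_wmap G l a hβ.1
      constructor
      · intro hσ
        rcases pos_or_neg G hγr with hγ | hγ
        · rcases eq_or_ne (T β) α' with h | h
          · exact Or.inr h
          · exact absurd (σ_pos G i hγ h) (fun hp => pos_neg_empty G hp (Set.mem_neg.mp hσ))
        · rcases eq_or_ne (T β) (-α') with h | h
          · exfalso
            have : G.σ i c (T β) = G.α i (G.act i c) := by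
              rw [h, map_neg, G.ax5_diag]; simp
            rw [this] at hσ
            exact pos_neg_empty G (α_pos G i (G.act i c)) (Set.mem_neg.mp hσ)
          · exact Or.inl ⟨Set.mem_neg.mpr hγ, h⟩
      · intro hcase
        rcases hcase with ⟨hγ, hne⟩ | hγ
        · have hnγ : -(T β) ∈ G.pos c := Set.mem_neg.mp hγ
          have hnne : -(T β) ≠ α' := fun hh => hne (by rw [← hh]; simp)
          have := σ_pos G i hnγ hnne
          rw [map_neg] at this
          exact Set.mem_neg.mpr (by simpa using this)
        · rw [hγ, G.ax5_diag]
          exact Set.mem_neg.mpr (by simpa using α_pos G i (G.act i c))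
    rcases pos_or_neg G hδroot with hδp | hδn
    · -- δ positive: insert
      have hset : InvSet G (i :: l) a = insert δ (InvSet G l a) := by
        ext β
        simp only [InvSet, Set.mem_setOf_eq, Set.mem_insert_iff, ht]
        constructor
        · rintro ⟨hβp, hσ⟩
          rw [hw] at hσ
          rcases (hiff β hβp).mp hσ with ⟨hγ, hne⟩ | hγ
          · exact Or.inr ⟨hβp, hγ⟩
          · exact Or.inl (T.injective (by rw [hγ, hTδ]))
        · rintro (rfl | ⟨hβp, hγ⟩)
          · exact ⟨hδp, by rw [hw]; exact (hiff δ hδp).mpr (Or.inr hTδ)⟩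
          · refine ⟨hβp, ?_⟩
            rw [hw]
            refine (hiff β hβp).mpr (Or.inl ⟨hγ, fun hh => ?_⟩)
            have hβδ : β = -δ := by
              have : T β = T (-δ) := by rw [hh, map_neg, hTδ]
              exact T.injective this
            rw [hβδ] at hβp
            exact pos_neg_empty G hδp hβp
      have hδni : δ ∉ InvSet G l a := by
        rintro ⟨_, hn⟩
        rw [← hT, hTδ] at hn
        exact pos_neg_empty G (α_pos G i c) (Set.mem_neg.mp hn)
      refine ⟨hset ▸ ihf.insert δ, ?_⟩
      rw [hset, Set.ncard_insert_of_notMem hδni ihf]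
      simp only [List.length_cons]
      omega
    · -- δ negative: remove -δ
      have hset : InvSet G (i :: l) a = InvSet G l a \ {-δ} := by
        ext β
        simp only [InvSet, Set.mem_setOf_eq, Set.mem_diff, Set.mem_singleton_iff, ht]
        constructor
        · rintro ⟨hβp, hσ⟩
          rw [hw] at hσ
          rcases (hiff β hβp).mp hσ with ⟨hγ, hne⟩ | hγ
          · refine ⟨⟨hβp, hγ⟩, fun hh => ?_⟩
            exact hne (by rw [hh, map_neg, hTδ])
          · exfalso
            have hβδ : β = δ := by
              have : T β = T δ := by rw [hγ, hTδ]
              exact T.injective this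
            rw [hβδ] at hβp
            exact pos_neg_empty G hβp hδn
        · rintro ⟨⟨hβp, hγ⟩, hne⟩
          refine ⟨hβp, ?_⟩
          rw [hw]
          refine (hiff β hβp).mpr (Or.inl ⟨hγ, fun hh => hne ?_⟩)
          have : T β = T (-δ) := by rw [hh, map_neg, hTδ]
          exact T.injective this
      have hδmem : -δ ∈ InvSet G l a := by
        refine ⟨hδn, ?_⟩
        rw [← hT, map_neg, hTδ]
        exact Set.mem_neg.mpr (by simpa using α_pos G i c)
      have hnonzero : 0 < (InvSet G l a).ncard :=
        (Set.ncard_pos ihf).mpr ⟨-δ, hδmem⟩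
      refine ⟨hset ▸ ihf.diff, ?_⟩
      rw [hset, Set.ncard_sdiff_singleton_of_mem hδmem]
      simp only [List.length_cons]
      omega

lemma pad_word [Nonempty N] (a : A) (k : ℕ) (w : List N) :
    ∃ w' : List N, w'.length = 2 * k + w.length ∧
      G.target w' a = G.target w a ∧ G.wmap w' a = G.wmap w a := by
  obtain ⟨n⟩ := (inferInstance : Nonempty N)
  induction k with
  | zero => exact ⟨w, by simp, rfl, rfl⟩
  | succ k ih =>
    obtain ⟨w', h1, h2, h3⟩ := ih
    refine ⟨n :: n :: w', by simp [h1]; omega, ?_, ?_⟩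
    · show G.act n (G.act n (G.target w' a)) = G.target w a
      rw [G.act_invol, h2]
    · apply LinearEquiv.ext
      intro v
      show G.σ n (G.target (n :: w') a) (G.σ n (G.target w' a) (G.wmap w' a v)) = G.wmap w a v
      rw [show G.target (n :: w') a = G.act n (G.target w' a) from rfl, G.ax6, h3]

end Aux

/-- if the word `(i₁, i₂, …, i_m)` at `a` is not reduced, then the word
`(i₂, …, i_m)` at `a` equals (same target, same σ-composite) a word
`(i₁, j₂, …, j_{m−1})` at `a`. -/
theorem stmt9 [Nonempty N] [Nonempty A] (G : GRS N A) (i₁ : N) (l : List N) (a : A)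
    (h : G.len (i₁ :: l) a < (i₁ :: l).length) :
    ∃ l' : List N, l'.length = l.length - 1 ∧
      G.target l a = G.target (i₁ :: l') a ∧ G.wmap l a = G.wmap (i₁ :: l') a := by
  set m := l.length with hm
  have hSne : {n | ∃ l'' : List N, l''.length = n ∧
      G.target l'' a = G.target (i₁ :: l) a ∧ G.wmap l'' a = G.wmap (i₁ :: l) a}.Nonempty :=
    ⟨(i₁ :: l).length, i₁ :: l, rfl, rfl, rfl⟩
  have hmem := Nat.sInf_mem hSne
  obtain ⟨w, hwl, hwt, hwm⟩ := hmem
  have hwlen : w.length < m + 1 := by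
    rw [hwl]
    exact h
  -- parity
  have hInv : InvSet G w a = InvSet G (i₁ :: l) a := by
    unfold InvSet
    rw [hwt, hwm]
  have hp1 := inv_parity G w a
  have hp2 := inv_parity G (i₁ :: l) a
  have hpar : w.length % 2 = (m + 1) % 2 := by
    have : (InvSet G w a).ncard = (InvSet G (i₁ :: l) a).ncard := by rw [hInv]
    have h2 : (i₁ :: l).length = m + 1 := by simp [hm]
    omega
  have hk : 2 * ((m - 1 - w.length) / 2) + w.length = m - 1 := by omega
  obtain ⟨w', hl', ht', hmap'⟩ := pad_word G a ((m - 1 - w.length) / 2) w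
  refine ⟨w', by omega, ?_, ?_⟩
  · have h1 : G.target (i₁ :: w') a = G.act i₁ (G.target w' a) := rfl
    rw [h1, ht', hwt]
    show G.target l a = G.act i₁ (G.act i₁ (G.target l a))
    rw [G.act_invol]
  · apply LinearEquiv.ext
    intro v
    have h1 : G.wmap (i₁ :: w') a v = G.σ i₁ (G.target w' a) (G.wmap w' a v) := rfl
    rw [h1, ht', hmap', hwt, hwm]
    show G.wmap l a v =
      G.σ i₁ (G.act i₁ (G.target l a)) (G.σ i₁ (G.target l a) (G.wmap l a v))
    rw [G.ax6]
end
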